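/- arXiv:2601.11274 — 3 statements merged into one kernel-verified Lean document; each statement's English description precedes it below -/
import Mathlib

section
/- Let Θ = {θ_j^I} be a suitable set of moduli of continuity and let {ν_n}_{n≥0} be parametric b-measures on ℝ^N with respect to {ω_j}_{j≥1} admitting, for each j ≥ 1, m-bounds {m_j^n}_{n≥0} that form an equicontinuous family (for every ε > 0 there is δ > 0 with m_j^n([s,t]) < ε whenever 0 ≤ t−s < δ, for all n ≥ 0). If ν_n → ν₀ in σ_Θ and t_n → t₀ in ℝ, then ν_n·t_n → ν₀·t₀ in σ_Θ, where (ν·t)_y(A) = ν_y(A + t); that is, for every compact interval I with rational endpoints and every j ∈ ℕ, lim_{n→∞} sup_{y(·)∈𝒦_j^I} |∫_I d(ν_n·t_n)_{y(s)} − ∫_I d(ν₀·t₀)_{y(s)}| = 0. -/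
open MeasureTheory Set Filter Topology

/-- A (continuous real) b-measure: a set function on the bounded Borel subsets of `ℝ`
which vanishes on `∅`, is countably additive over countable pairwise disjoint families
of bounded Borel sets with bounded union, and vanishes on singletons. -/
structure IsBMeasure (μ : Set ℝ → ℝ) : Prop where
  empty : μ ∅ = 0
  countably_additive : ∀ A : ℕ → Set ℝ, (∀ n, MeasurableSet (A n)) →
    (∀ n, Bornology.IsBounded (A n)) → Pairwise (Function.onFun Disjoint A) →
    Bornology.IsBounded (⋃ n, A n) →
    HasSum (fun n => μ (A n)) (μ (⋃ n, A n))
  singleton : ∀ t : ℝ, μ {t} = 0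

/-- A locally finite atomless Borel measure on `ℝ`. -/
def GoodMeasure (m : Measure ℝ) : Prop :=
  IsLocallyFiniteMeasure m ∧ ∀ t : ℝ, m {t} = 0

/-- `P` is a finite Borel partition of `A`. -/
def IsBorelPartition (A : Set ℝ) {n : ℕ} (P : Fin n → Set ℝ) : Prop :=
  (∀ i, MeasurableSet (P i)) ∧ Pairwise (Function.onFun Disjoint P) ∧ (⋃ i, P i) = A

/-- `|μ| ≤ m` : total-variation bound of the set function `μ` by the measure `m`,
expressed through finite Borel partitions of bounded Borel sets. -/
def TVLE (μ : Set ℝ → ℝ) (m : Measure ℝ) : Prop :=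
  ∀ A : Set ℝ, Bornology.IsBounded A → MeasurableSet A →
    ∀ (n : ℕ) (P : Fin n → Set ℝ), IsBorelPartition A P →
      ∑ i, |μ (P i)| ≤ (m A).toReal

/-- Partition-sum bound `Σ |μ₁(Aᵢ) - μ₂(Aᵢ)| ≤ c · l(A)` for the difference of two
set functions, over finite Borel partitions of bounded Borel sets. -/
def DiffLE (μ₁ μ₂ : Set ℝ → ℝ) (c : ℝ) (l : Measure ℝ) : Prop :=
  ∀ A : Set ℝ, Bornology.IsBounded A → MeasurableSet A →
    ∀ (n : ℕ) (P : Fin n → Set ℝ), IsBorelPartition A P →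
      ∑ i, |μ₁ (P i) - μ₂ (P i)| ≤ c * (l A).toReal

variable {E : Type*} [NormedAddCommGroup E]

/-- `m` is an m-bound of `ν` on the closed ball of radius `j`. -/
def HasMBound (ν : E → Set ℝ → ℝ) (j : ℕ) (m : Measure ℝ) : Prop :=
  GoodMeasure m ∧ ∀ y : E, ‖y‖ ≤ (j : ℝ) → TVLE (ν y) m

/-- `l` is an l-bound of `ν` on the closed ball of radius `j`, for the modulus `ω`. -/
def HasLBound (ω : ℝ → ℝ) (ν : E → Set ℝ → ℝ) (j : ℕ) (l : Measure ℝ) : Prop :=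
  GoodMeasure l ∧ ∀ y₁ y₂ : E, ‖y₁‖ ≤ (j : ℝ) → ‖y₂‖ ≤ (j : ℝ) →
    DiffLE (ν y₁) (ν y₂) (ω ‖y₁ - y₂‖) l

/-- A non-decreasing family of moduli of continuity `{ω_j}`. -/
structure IsModulusFamily (ω : ℕ → ℝ → ℝ) : Prop where
  continuousOn : ∀ j, ContinuousOn (ω j) (Ici 0)
  monotoneOn : ∀ j, MonotoneOn (ω j) (Ici 0)
  map_zero : ∀ j, ω j 0 = 0
  nonneg : ∀ j x, 0 ≤ x → 0 ≤ ω j x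
  mono_index : ∀ j x, 0 ≤ x → ω j x ≤ ω (j + 1) x

/-- A parametric b-measure on `E` with respect to the family of moduli `ω`. -/
def IsParamBMeasure (ω : ℕ → ℝ → ℝ) (ν : E → Set ℝ → ℝ) : Prop :=
  (∀ y, IsBMeasure (ν y)) ∧
    ∀ j : ℕ, 1 ≤ j → ∃ m l : Measure ℝ, HasMBound ν j m ∧ HasLBound (ω j) ν j l

/-- A tagged partition of `[a,b]`. -/
structure TaggedPartition (a b : ℝ) where
  k : ℕ
  k_pos : 0 < k
  t : ℕ → ℝ
  tag : ℕ → ℝ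
  left : t 0 = a
  right : t k = b
  lt : ∀ i < k, t i < t (i + 1)
  tag_mem : ∀ i < k, tag i ∈ Set.Icc (t i) (t (i + 1))

/-- The mesh of the tagged partition is `< δ`. -/
def TaggedPartition.MeshLT {a b : ℝ} (P : TaggedPartition a b) (δ : ℝ) : Prop :=
  ∀ i < P.k, P.t (i + 1) - P.t i < δ

/-- The Riemann sum of the parametric b-measure `ν` along the curve `y` over the
tagged partition `P`. -/
def RiemannSum (ν : E → Set ℝ → ℝ) (y : ℝ → E) {a b : ℝ} (P : TaggedPartition a b) : ℝ :=
  ∑ i ∈ Finset.range P.k, ν (y (P.tag i)) (Set.Icc (P.t i) (P.t (i + 1)))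

/-- `L = ∫_a^b dν_{y(s)}` : `L` is the limit of the Riemann sums of `ν` along `y`
over tagged partitions of `[a,b]` as the mesh tends to `0`. -/
def IsCurveIntegral (ν : E → Set ℝ → ℝ) (y : ℝ → E) (a b : ℝ) (L : ℝ) : Prop :=
  ∀ ε > 0, ∃ δ > 0, ∀ P : TaggedPartition a b, P.MeshLT δ → |L - RiemannSum ν y P| < ε

/-- A suitable set of moduli of continuity `Θ = {θ_j^{[q₁,q₂]}}`. -/
structure IsSuitableModuli (Θ : ℕ → ℚ → ℚ → ℝ → ℝ) : Prop where
  continuousOn : ∀ (j : ℕ) (q₁ q₂ : ℚ), q₁ < q₂ → ContinuousOn (Θ j q₁ q₂) (Ici 0)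
  monotoneOn : ∀ (j : ℕ) (q₁ q₂ : ℚ), q₁ < q₂ → MonotoneOn (Θ j q₁ q₂) (Ici 0)
  map_zero : ∀ (j : ℕ) (q₁ q₂ : ℚ), q₁ < q₂ → Θ j q₁ q₂ 0 = 0
  nonneg : ∀ (j : ℕ) (q₁ q₂ : ℚ) (x : ℝ), q₁ < q₂ → 0 ≤ x → 0 ≤ Θ j q₁ q₂ x
  mono : ∀ (j₁ j₂ : ℕ) (q₁ q₂ p₁ p₂ : ℚ), j₁ ≤ j₂ → q₁ ≤ p₁ → p₁ < p₂ → p₂ ≤ q₂ →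
    ∀ x : ℝ, 0 ≤ x → Θ j₁ p₁ p₂ x ≤ Θ j₂ q₁ q₂ x

/-- The set `𝒦_j^I` of continuous functions `y : I → E`, `I = [q₁,q₂]`, bounded by `j`
and admitting `θ_j^I` as modulus of continuity. -/
def KSet (E : Type*) [NormedAddCommGroup E] (Θ : ℕ → ℚ → ℚ → ℝ → ℝ)
    (j : ℕ) (q₁ q₂ : ℚ) : Set (ℝ → E) :=
  {y | ContinuousOn y (Set.Icc (q₁ : ℝ) (q₂ : ℝ)) ∧
    (∀ t ∈ Set.Icc (q₁ : ℝ) (q₂ : ℝ), ‖y t‖ ≤ (j : ℝ)) ∧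
    ∀ t₁ ∈ Set.Icc (q₁ : ℝ) (q₂ : ℝ), ∀ t₂ ∈ Set.Icc (q₁ : ℝ) (q₂ : ℝ),
      ‖y t₁ - y t₂‖ ≤ Θ j q₁ q₂ |t₁ - t₂|}

/-- Convergence `ν_n → ν₀` in the topology `σ_Θ` : the integrals along curves of
`𝒦_j^I` converge uniformly, for every `j` and every compact interval `I` with
rational endpoints. -/
def SigmaThetaTendsto {E : Type*} [NormedAddCommGroup E] (Θ : ℕ → ℚ → ℚ → ℝ → ℝ)
    (ν : ℕ → E → Set ℝ → ℝ) (ν₀ : E → Set ℝ → ℝ) : Prop :=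
  ∀ (j : ℕ) (q₁ q₂ : ℚ), q₁ < q₂ → ∀ ε > 0, ∃ n₀ : ℕ, ∀ n ≥ n₀,
    ∀ y ∈ KSet E Θ j q₁ q₂, ∀ L L₀ : ℝ,
      IsCurveIntegral (ν n) y (q₁ : ℝ) (q₂ : ℝ) L →
      IsCurveIntegral ν₀ y (q₁ : ℝ) (q₂ : ℝ) L₀ → |L - L₀| < ε

/-- The time-translate `ν·t` of a parametric b-measure: `(ν·t)_y(A) = ν_y(A + t)`. -/
def BTranslate (ν : E → Set ℝ → ℝ) (t : ℝ) : E → Set ℝ → ℝ :=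
  fun y A => ν y ((fun s => s + t) '' A)

/-- The time-translate `m·t` of a Borel measure: `(m·t)(A) = m(A + t)`. -/
noncomputable def MTranslate (m : Measure ℝ) (t : ℝ) : Measure ℝ :=
  Measure.map (fun s => s - t) m

/-- An N-dimensional parametric b-measure on `E` with common m-bounds `m j` and
common Lipschitz l-bounds `l j`. -/
def IsNDimParamBMeasure {M : ℕ} (νbar : Fin M → E → Set ℝ → ℝ)
    (m l : ℕ → Measure ℝ) : Prop :=
  (∀ i y, IsBMeasure (νbar i y)) ∧
    ∀ j : ℕ, 1 ≤ j → GoodMeasure (m j) ∧ GoodMeasure (l j) ∧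
      (∀ i, ∀ y : E, ‖y‖ ≤ (j : ℝ) → TVLE (νbar i y) (m j)) ∧
      (∀ i, ∀ y₁ y₂ : E, ‖y₁‖ ≤ (j : ℝ) → ‖y₂‖ ≤ (j : ℝ) →
        DiffLE (νbar i y₁) (νbar i y₂) ‖y₁ - y₂‖ (l j))

/-- The oriented curve integral: `∫_b^a := -∫_a^b`. -/
def IsSignedCurveIntegral (ν : E → Set ℝ → ℝ) (y : ℝ → E) (a b : ℝ) (L : ℝ) : Prop :=
  (a ≤ b ∧ IsCurveIntegral ν y a b L) ∨ (b < a ∧ IsCurveIntegral ν y b a (-L))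

/-- `y` is a solution on `S` of the Cauchy problem `y' = ν̄_y`, `y(t₀) = y₀`, for the
N-dimensional parametric b-measure `ν̄`: componentwise,
`y_i(t) = y_{0,i} + ∫_{t₀}^t dν^i_{y(s)}`. -/
def IsSolutionOn {M : ℕ} (νbar : Fin M → EuclideanSpace ℝ (Fin M) → Set ℝ → ℝ)
    (t₀ : ℝ) (y₀ : EuclideanSpace ℝ (Fin M)) (S : Set ℝ)
    (y : ℝ → EuclideanSpace ℝ (Fin M)) : Prop :=
  t₀ ∈ S ∧ y t₀ = y₀ ∧ ContinuousOn y S ∧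
    ∀ t ∈ S, ∀ i : Fin M, IsSignedCurveIntegral (νbar i) y t₀ t (y t i - y₀ i)

/-- `y` is the maximal (noncontinuable) solution, defined on the open interval `S`:
every solution on an interval containing `t₀` is a restriction of `y`. -/
def IsMaximalSolution {M : ℕ} (νbar : Fin M → EuclideanSpace ℝ (Fin M) → Set ℝ → ℝ)
    (t₀ : ℝ) (y₀ : EuclideanSpace ℝ (Fin M)) (S : Set ℝ)
    (y : ℝ → EuclideanSpace ℝ (Fin M)) : Prop :=
  IsSolutionOn νbar t₀ y₀ S y ∧ IsOpen S ∧ S.OrdConnected ∧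
    ∀ S' : Set ℝ, S'.OrdConnected → ∀ z, IsSolutionOn νbar t₀ y₀ S' z →
      S' ⊆ S ∧ Set.EqOn z y S'


section Chain
theorem chain_mono {α : Type*} [Preorder α] (t : ℕ → α) {k : ℕ}
    (h : ∀ i < k, t i ≤ t (i + 1)) : ∀ i j, i ≤ j → j ≤ k → t i ≤ t j := by
  intro i j hij
  induction j, hij using Nat.le_induction with
  | base => intro _; exact le_rfl
  | succ j hij ih =>
    intro hjk
    exact le_trans (ih (Nat.le_of_succ_le hjk)) (h j (Nat.lt_of_succ_le hjk))

theorem chain_strict {α : Type*} [Preorder α] (t : ℕ → α) {k : ℕ}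
    (h : ∀ i < k, t i < t (i + 1)) : ∀ i j, i < j → j ≤ k → t i < t j := by
  intro i j hij
  induction j, hij using Nat.le_induction with
  | base => intro hk; exact h i (Nat.lt_of_succ_le hk)
  | succ j hij ih =>
    intro hjk
    exact lt_trans (ih (Nat.le_of_succ_le hjk)) (h j (Nat.lt_of_succ_le hjk))
end Chain

namespace IsBMeasure
variable {μ : Set ℝ → ℝ} (hμ : IsBMeasure μ)

theorem union2 (hμ : IsBMeasure μ) {A B : Set ℝ} (hAm : MeasurableSet A) (hBm : MeasurableSet B)
    (hAb : Bornology.IsBounded A) (hBb : Bornology.IsBounded B) (hd : Disjoint A B) :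
    μ (A ∪ B) = μ A + μ B := by
  classical
  set f : ℕ → Set ℝ := fun n => if n = 0 then A else if n = 1 then B else ∅ with hf
  have hU : (⋃ n, f n) = A ∪ B := by
    ext x
    simp only [mem_iUnion, hf, mem_union]
    constructor
    · rintro ⟨n, hn⟩
      split_ifs at hn with h1 h2
      · exact Or.inl hn
      · exact Or.inr hn
      · exact absurd hn (notMem_empty x)
    · rintro (h | h)
      · exact ⟨0, by simp [h]⟩
      · exact ⟨1, by simp [h]⟩
  have hs := hμ.countably_additive f
    (fun n => by by_cases h1 : n = 0 <;> by_cases h2 : n = 1 <;>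
      simp [hf, h1, h2, hAm, hBm, MeasurableSet.empty])
    (fun n => by by_cases h1 : n = 0 <;> by_cases h2 : n = 1 <;>
      simp [hf, h1, h2, hAb, hBb, Bornology.isBounded_empty])
    (by
      intro i j hij
      simp only [Function.onFun, hf]
      split_ifs <;>
        first
          | exact hd
          | exact hd.symm
          | exact disjoint_empty _
          | exact empty_disjoint _
          | omega)
    (by rw [hU]; exact hAb.union hBb)
  rw [hU] at hs
  have hs' : HasSum (fun n => μ (f n)) (μ A + μ B) := by
    have h2 : ∀ n ∉ ({0, 1} : Finset ℕ), μ (f n) = 0 := by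
      intro n hn
      simp only [Finset.mem_insert, Finset.mem_singleton] at hn
      push_neg at hn
      simp [hf, hn.1, hn.2, hμ.empty]
    have := hasSum_sum_of_ne_finset_zero (L := SummationFilter.unconditional ℕ) h2
    simpa [hf] using this
  exact hs.unique hs'

theorem icc_eq_ioc (hμ : IsBMeasure μ) {a b : ℝ} (hab : a ≤ b) : μ (Icc a b) = μ (Ioc a b) := by
  have h : Icc a b = {a} ∪ Ioc a b := by
    ext x
    simp only [mem_Icc, mem_union, mem_singleton_iff, mem_Ioc]
    constructor
    · rintro ⟨h1, h2⟩
      rcases eq_or_lt_of_le h1 with h | h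
      · exact Or.inl h.symm
      · exact Or.inr ⟨h, h2⟩
    · rintro (rfl | ⟨h1, h2⟩)
      · exact ⟨le_rfl, hab⟩
      · exact ⟨h1.le, h2⟩
  rw [h, hμ.union2 (measurableSet_singleton a) measurableSet_Ioc
    Bornology.isBounded_singleton (Metric.isBounded_Ioc _ _)
    (by rw [Set.disjoint_left]; rintro x rfl hx; exact lt_irrefl x hx.1), hμ.singleton, zero_add]

theorem icc_split (hμ : IsBMeasure μ) {a c b : ℝ} (hac : a ≤ c) (hcb : c ≤ b) :
    μ (Icc a b) = μ (Icc a c) + μ (Icc c b) := by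
  rw [← Set.Icc_union_Ioc_eq_Icc hac hcb,
    hμ.union2 measurableSet_Icc measurableSet_Ioc (Metric.isBounded_Icc _ _) (Metric.isBounded_Ioc _ _)
      (by rw [Set.disjoint_left]; rintro x hx1 hx2; exact absurd hx2.1 hx1.2.not_gt),
    hμ.icc_eq_ioc hcb]

/-- Telescoping over consecutive nodes. -/
theorem icc_telescope (hμ : IsBMeasure μ) (t : ℕ → ℝ) {m n : ℕ} (hmn : m ≤ n)
    (hmono : ∀ i, m ≤ i → i < n → t i ≤ t (i + 1)) :
    μ (Icc (t m) (t n)) = ∑ i ∈ Finset.Ico m n, μ (Icc (t i) (t (i + 1))) := by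
  induction n, hmn using Nat.le_induction with
  | base => simp [Set.Icc_self, hμ.singleton]
  | succ n hmn ih =>
    have hchain : t m ≤ t n := by
      have : ∀ i, m ≤ i → i ≤ n → t m ≤ t i := by
        intro i hmi
        induction i, hmi using Nat.le_induction with
        | base => intro _; exact le_rfl
        | succ i hmi ih =>
          intro hin
          exact le_trans (ih (Nat.le_of_succ_le hin))
            (hmono i hmi (Nat.lt_of_succ_le (Nat.succ_le_succ (Nat.le_of_succ_le hin))))
      exact this n hmn le_rfl
    rw [hμ.icc_split (c := t n) hchain (hmono n hmn (Nat.lt_succ_self n)),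
      ih (fun i h1 h2 => hmono i h1 (h2.trans (Nat.lt_succ_self n))),
      Finset.sum_Ico_succ_top hmn]
end IsBMeasure

section MeasTel
/-- measure telescoping bound -/
theorem measure_icc_eq_ioc {l : Measure ℝ} (hatom : ∀ x : ℝ, l {x} = 0) {a b : ℝ} (hab : a ≤ b) :
    l (Icc a b) = l (Ioc a b) := by
  apply le_antisymm
  · calc l (Icc a b) ≤ l ({a} ∪ Ioc a b) := by
          apply measure_mono
          intro x hx
          rcases eq_or_lt_of_le hx.1 with h | h
          · exact Or.inl h.symm
          · exact Or.inr ⟨h, hx.2⟩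
      _ ≤ l {a} + l (Ioc a b) := measure_union_le _ _
      _ = l (Ioc a b) := by rw [hatom, zero_add]
  · exact measure_mono Set.Ioc_subset_Icc_self

theorem measure_ioc_telescope (l : Measure ℝ) (t : ℕ → ℝ) {k : ℕ}
    (hmono : ∀ i < k, t i ≤ t (i + 1)) :
    ∑ i ∈ Finset.range k, l (Ioc (t i) (t (i + 1))) = l (Ioc (t 0) (t k)) := by
  induction k with
  | zero => simp
  | succ k ih =>
    have hm : ∀ i < k, t i ≤ t (i + 1) := fun i hi => hmono i (hi.trans (Nat.lt_succ_self k))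
    rw [Finset.sum_range_succ, ih hm, ← measure_union (by
        rw [Set.disjoint_left]; rintro x hx1 hx2; exact absurd hx2.1 hx1.2.not_gt)
      measurableSet_Ioc, Set.Ioc_union_Ioc_eq_Ioc (chain_mono t hm 0 k (Nat.zero_le k) le_rfl)
      (hmono k (Nat.lt_succ_self k))]

theorem sum_measure_icc_le (l : Measure ℝ) (hatom : ∀ x : ℝ, l {x} = 0) (t : ℕ → ℝ) {k : ℕ}
    (hmono : ∀ i < k, t i ≤ t (i + 1)) {a b : ℝ} (hsub : Ioc (t 0) (t k) ⊆ Icc a b)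
    (hfin : l (Icc a b) ≠ ⊤) :
    ∑ i ∈ Finset.range k, (l (Icc (t i) (t (i + 1)))).toReal ≤ (l (Icc a b)).toReal := by
  have h1 : ∀ i ∈ Finset.range k, (l (Icc (t i) (t (i + 1)))).toReal
      = (l (Ioc (t i) (t (i + 1)))).toReal := by
    intro i hi
    rw [measure_icc_eq_ioc hatom (hmono i (Finset.mem_range.1 hi))]
  rw [Finset.sum_congr rfl h1]
  have hfin' : ∀ i ∈ Finset.range k, l (Ioc (t i) (t (i + 1))) ≠ ⊤ := by
    intro i hi
    refine ne_top_of_le_ne_top hfin (le_trans ?_ (measure_mono hsub))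
    rw [← measure_ioc_telescope l t hmono]
    exact Finset.single_le_sum (f := fun i => l (Ioc (t i) (t (i+1)))) (fun _ _ => zero_le) hi
  rw [← ENNReal.toReal_sum hfin', measure_ioc_telescope l t hmono]
  exact ENNReal.toReal_mono hfin (measure_mono hsub)
end MeasTel


section Part3
variable {E : Type*} [NormedAddCommGroup E]

theorem TVLE.abs_le {μ : Set ℝ → ℝ} {m : Measure ℝ} (h : TVLE μ m) {A : Set ℝ}
    (hAb : Bornology.IsBounded A) (hAm : MeasurableSet A) : |μ A| ≤ (m A).toReal := by
  have := h A hAb hAm 1 (fun _ => A)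
    ⟨fun _ => hAm, fun i j hij => absurd (Subsingleton.elim i j) hij, by rw [Set.iUnion_const]⟩
  simpa using this

theorem DiffLE.abs_le {μ₁ μ₂ : Set ℝ → ℝ} {c : ℝ} {l : Measure ℝ} (h : DiffLE μ₁ μ₂ c l)
    {A : Set ℝ} (hAb : Bornology.IsBounded A) (hAm : MeasurableSet A) :
    |μ₁ A - μ₂ A| ≤ c * (l A).toReal := by
  have := h A hAb hAm 1 (fun _ => A)
    ⟨fun _ => hAm, fun i j hij => absurd (Subsingleton.elim i j) hij, by rw [Set.iUnion_const]⟩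
  simpa using this

namespace TaggedPartition
variable {a b : ℝ} (P : TaggedPartition a b)

theorem t_le : ∀ i < P.k, P.t i ≤ P.t (i + 1) := fun i hi => (P.lt i hi).le

theorem t_mono {i j : ℕ} (hij : i ≤ j) (hj : j ≤ P.k) : P.t i ≤ P.t j :=
  chain_mono P.t P.t_le i j hij hj

theorem a_le_t {i : ℕ} (hi : i ≤ P.k) : a ≤ P.t i := by
  have := P.t_mono (Nat.zero_le i) hi; rwa [P.left] at this

theorem t_le_b {i : ℕ} (hi : i ≤ P.k) : P.t i ≤ b := by
  have := P.t_mono hi le_rfl; rwa [P.right] at this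

theorem a_lt_b (Q : TaggedPartition a b) : a < b := by
  have := chain_strict Q.t Q.lt 0 Q.k Q.k_pos le_rfl; rwa [Q.left, Q.right] at this

theorem tag_mem_Icc {i : ℕ} (hi : i < P.k) : P.tag i ∈ Icc a b := by
  obtain ⟨h1, h2⟩ := P.tag_mem i hi
  exact ⟨le_trans (P.a_le_t hi.le) h1, le_trans h2 (P.t_le_b hi)⟩

/-- transfer a partition across equal endpoints -/
def copy {a' b' : ℝ} (ha : a = a') (hb : b = b') : TaggedPartition a' b' where
  k := P.k
  k_pos := P.k_pos
  t := P.t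
  tag := P.tag
  left := ha ▸ P.left
  right := hb ▸ P.right
  lt := P.lt
  tag_mem := P.tag_mem

theorem copy_rs {ν : E → Set ℝ → ℝ} {y : ℝ → E} {a' b' : ℝ} (ha : a = a') (hb : b = b') :
    RiemannSum ν y (P.copy ha hb) = RiemannSum ν y P := rfl

theorem copy_mesh {a' b' : ℝ} (ha : a = a') (hb : b = b') {δ : ℝ} (h : P.MeshLT δ) :
    (P.copy ha hb).MeshLT δ := h

end TaggedPartition

/-- uniform partition existence -/
theorem exists_taggedPartition {a b δ : ℝ} (hab : a < b) (hδ : 0 < δ) :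
    ∃ P : TaggedPartition a b, P.MeshLT δ := by
  obtain ⟨k, hk⟩ := exists_nat_gt ((b - a) / δ)
  have hk1 : (0:ℝ) < (k:ℝ) + 1 := by positivity
  have hstep : 0 < (b - a) / ((k:ℝ) + 1) := div_pos (by linarith) hk1
  have hmesh : (b - a) / ((k:ℝ) + 1) < δ := by
    rw [div_lt_iff₀ hk1]
    have h1 : b - a < δ * k := by
      have := (div_lt_iff₀ hδ).1 hk
      linarith
    nlinarith
  refine ⟨⟨k + 1, Nat.succ_pos k, fun i => a + i * ((b - a) / ((k:ℝ) + 1)),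
    fun i => a + i * ((b - a) / ((k:ℝ) + 1)), by simp, ?_, ?_, ?_⟩, ?_⟩
  · push_cast
    field_simp
    ring
  · intro i _
    have : ((i:ℝ) + 1) * ((b - a) / ((k:ℝ) + 1)) = i * ((b - a) / ((k:ℝ) + 1)) + (b - a) / ((k:ℝ) + 1) := by ring
    push_cast
    nlinarith [hstep]
  · intro i _
    constructor
    · exact le_rfl
    · push_cast; nlinarith [hstep]
  · intro i _
    simp only []
    push_cast
    nlinarith [hmesh, hstep]

namespace TaggedPartition
variable {a c b : ℝ}

/-- concatenation of tagged partitions -/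
def trans (P : TaggedPartition a c) (Q : TaggedPartition c b) : TaggedPartition a b where
  k := P.k + Q.k
  k_pos := Nat.add_pos_left P.k_pos _
  t := fun i => if i < P.k then P.t i else Q.t (i - P.k)
  tag := fun i => if i < P.k then P.tag i else Q.tag (i - P.k)
  left := by simp [P.k_pos, P.left]
  right := by
    have h : ¬ (P.k + Q.k < P.k) := by omega
    simp [h, Q.right]
  lt := by
    intro i hi
    by_cases h1 : i + 1 < P.k
    · have h0 : i < P.k := by omega
      simp only [if_pos h0, if_pos h1]
      exact P.lt i h0
    · by_cases h0 : i < P.k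
      · have he : i + 1 = P.k := by omega
        have : Q.t (i + 1 - P.k) = P.t (i + 1) := by
          rw [he]; simp [Q.left, P.right]
        simp only [if_pos h0, if_neg h1, this]
        exact P.lt i h0
      · simp only [if_neg h0, if_neg h1]
        have he : i + 1 - P.k = (i - P.k) + 1 := by omega
        rw [he]
        exact Q.lt (i - P.k) (by omega)
  tag_mem := by
    intro i hi
    by_cases h1 : i + 1 < P.k
    · have h0 : i < P.k := by omega
      simp only [if_pos h0, if_pos h1]
      exact P.tag_mem i h0
    · by_cases h0 : i < P.k
      · have he : i + 1 = P.k := by omega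
        have : Q.t (i + 1 - P.k) = P.t (i + 1) := by
          rw [he]; simp [Q.left, P.right]
        simp only [if_pos h0, if_neg h1, this]
        exact P.tag_mem i h0
      · simp only [if_neg h0, if_neg h1]
        have he : i + 1 - P.k = (i - P.k) + 1 := by omega
        rw [he]
        exact Q.tag_mem (i - P.k) (by omega)

theorem trans_meshLT {δ : ℝ} {P : TaggedPartition a c} {Q : TaggedPartition c b}
    (hP : P.MeshLT δ) (hQ : Q.MeshLT δ) : (P.trans Q).MeshLT δ := by
  intro i hi
  show (P.trans Q).t (i+1) - (P.trans Q).t i < δ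
  unfold trans at hi ⊢
  simp only at hi ⊢
  by_cases h1 : i + 1 < P.k
  · have h0 : i < P.k := by omega
    simp only [if_pos h0, if_pos h1]
    exact hP i h0
  · by_cases h0 : i < P.k
    · have he : i + 1 = P.k := by omega
      have : Q.t (i + 1 - P.k) = P.t (i + 1) := by rw [he]; simp [Q.left, P.right]
      simp only [if_pos h0, if_neg h1, this]
      exact hP i h0
    · simp only [if_neg h0, if_neg h1]
      have he : i + 1 - P.k = (i - P.k) + 1 := by omega
      rw [he]
      exact hQ (i - P.k) (by omega)

theorem trans_riemannSum {E : Type*} [NormedAddCommGroup E] (ν : E → Set ℝ → ℝ) (y : ℝ → E)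
    (P : TaggedPartition a c) (Q : TaggedPartition c b) :
    RiemannSum ν y (P.trans Q) = RiemannSum ν y P + RiemannSum ν y Q := by
  unfold RiemannSum
  show (∑ i ∈ Finset.range (P.k + Q.k), _) = _
  rw [Finset.sum_range_add]
  congr 1
  · apply Finset.sum_congr rfl
    intro i hi
    have h0 : i < P.k := Finset.mem_range.1 hi
    by_cases h1 : i + 1 < P.k
    · simp only [trans, if_pos h0, if_pos h1]
    · have he : i + 1 = P.k := by omega
      have h2 : Q.t (i + 1 - P.k) = P.t (i + 1) := by rw [he]; simp [Q.left, P.right]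
      simp only [trans, if_pos h0, if_neg h1, h2]
  · apply Finset.sum_congr rfl
    intro i hi
    have h0 : ¬ (P.k + i < P.k) := by omega
    have h1 : ¬ (P.k + i + 1 < P.k) := by omega
    have e0 : P.k + i - P.k = i := by omega
    have e1 : P.k + i + 1 - P.k = i + 1 := by omega
    simp only [trans, if_neg h0, if_neg h1, e0, e1]

end TaggedPartition

section Part5
variable {E : Type*} [NormedAddCommGroup E]

theorem riemannSum_const {ν : E → Set ℝ → ℝ} (hν : ∀ v, IsBMeasure (ν v)) {y : ℝ → E} {v : E}
    {a b : ℝ} (hy : ∀ s ∈ Icc a b, y s = v) (P : TaggedPartition a b) :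
    RiemannSum ν y P = ν v (Icc a b) := by
  unfold RiemannSum
  have h1 : ∀ i ∈ Finset.range P.k, ν (y (P.tag i)) (Icc (P.t i) (P.t (i + 1)))
      = ν v (Icc (P.t i) (P.t (i + 1))) := by
    intro i hi
    rw [hy _ (P.tag_mem_Icc (Finset.mem_range.1 hi))]
  rw [Finset.sum_congr rfl h1]
  have h2 := (hν v).icc_telescope P.t (Nat.zero_le P.k) (fun i _ hi => P.t_le i hi)
  rw [P.left, P.right] at h2
  rw [h2, Finset.range_eq_Ico]

theorem isCurveIntegral_const {ν : E → Set ℝ → ℝ} (hν : ∀ v, IsBMeasure (ν v)) {y : ℝ → E}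
    {v : E} {a b : ℝ} (hy : ∀ s ∈ Icc a b, y s = v) :
    IsCurveIntegral ν y a b (ν v (Icc a b)) := by
  intro ε hε
  exact ⟨1, one_pos, fun P _ => by rw [riemannSum_const hν hy P, sub_self, abs_zero]; exact hε⟩

theorem riemannSum_congr {ν : E → Set ℝ → ℝ} {y z : ℝ → E} {a b : ℝ}
    (h : Set.EqOn y z (Icc a b)) (P : TaggedPartition a b) :
    RiemannSum ν y P = RiemannSum ν z P := by
  unfold RiemannSum
  exact Finset.sum_congr rfl fun i hi => by
    rw [h (P.tag_mem_Icc (Finset.mem_range.1 hi))]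

theorem isCurveIntegral_congr {ν : E → Set ℝ → ℝ} {y z : ℝ → E} {a b L : ℝ}
    (h : Set.EqOn y z (Icc a b)) (hL : IsCurveIntegral ν y a b L) :
    IsCurveIntegral ν z a b L := by
  intro ε hε
  obtain ⟨δ, hδ, hP⟩ := hL ε hε
  exact ⟨δ, hδ, fun P hm => by rw [← riemannSum_congr h P]; exact hP P hm⟩

/-- shift a partition down by `c` -/
def TaggedPartition.sub {a b : ℝ} (P : TaggedPartition a b) (c : ℝ) :
    TaggedPartition (a - c) (b - c) where
  k := P.k
  k_pos := P.k_pos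
  t := fun i => P.t i - c
  tag := fun i => P.tag i - c
  left := by show P.t 0 - c = a - c; rw [P.left]
  right := by show P.t P.k - c = b - c; rw [P.right]
  lt := fun i hi => by have := P.lt i hi; linarith
  tag_mem := fun i hi => by
    obtain ⟨h1, h2⟩ := P.tag_mem i hi
    simp only [Set.mem_Icc]
    exact ⟨by linarith, by linarith⟩

theorem image_add_Icc (c u v : ℝ) : (fun s => s + c) '' Icc u v = Icc (u + c) (v + c) := by
  ext x
  simp only [mem_image, mem_Icc]
  constructor
  · rintro ⟨s, ⟨h1, h2⟩, rfl⟩; exact ⟨by linarith, by linarith⟩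
  · rintro ⟨h1, h2⟩; exact ⟨x - c, ⟨by linarith, by linarith⟩, by ring⟩

/-- from an integral of the translated measure, get an integral of the original measure
along the shifted curve over the shifted interval -/
theorem isCurveIntegral_unshift {ν : E → Set ℝ → ℝ} {y : ℝ → E} {a b c L : ℝ}
    (h : IsCurveIntegral (BTranslate ν c) y a b L) :
    IsCurveIntegral ν (fun s => y (s - c)) (a + c) (b + c) L := by
  intro ε hε
  obtain ⟨δ, hδ, hP⟩ := h ε hε
  refine ⟨δ, hδ, fun Q hm => ?_⟩
  set P : TaggedPartition a b := (Q.sub c).copy (by ring) (by ring) with hPdef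
  have hrs : RiemannSum (BTranslate ν c) y P = RiemannSum ν (fun s => y (s - c)) Q := by
    unfold RiemannSum
    apply Finset.sum_congr rfl
    intro i hi
    show (BTranslate ν c) (y (Q.tag i - c)) (Icc (Q.t i - c) (Q.t (i+1) - c)) = _
    unfold BTranslate
    rw [image_add_Icc]
    congr 2 <;> ring
  have hmesh : P.MeshLT δ := by
    intro i hi
    have := hm i hi
    show Q.t (i+1) - c - (Q.t i - c) < δ
    linarith
  rw [← hrs]
  exact hP P hmesh

end Part5

section Part6
variable {E : Type*} [NormedAddCommGroup E]

theorem sum_toReal_icc_le (l : Measure ℝ) (hatom : ∀ x : ℝ, l {x} = 0) {a b : ℝ}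
    (P : TaggedPartition a b) (hfin : l (Icc a b) ≠ ⊤) :
    ∑ i ∈ Finset.range P.k, (l (Icc (P.t i) (P.t (i + 1)))).toReal ≤ (l (Icc a b)).toReal := by
  apply sum_measure_icc_le l hatom P.t P.t_le _ hfin
  rw [P.left, P.right]
  exact Set.Ioc_subset_Icc_self

theorem riemannSum_sub_le {ν ν' : E → Set ℝ → ℝ} {y₁ y₂ : ℝ → E} {a b : ℝ}
    (P : TaggedPartition a b) {C : ℝ} (hC : 0 ≤ C) (l : Measure ℝ)
    (hatom : ∀ x : ℝ, l {x} = 0) (hfin : l (Icc a b) ≠ ⊤)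
    (h : ∀ i < P.k, |ν (y₁ (P.tag i)) (Icc (P.t i) (P.t (i + 1)))
      - ν' (y₂ (P.tag i)) (Icc (P.t i) (P.t (i + 1)))|
        ≤ C * (l (Icc (P.t i) (P.t (i + 1)))).toReal) :
    |RiemannSum ν y₁ P - RiemannSum ν' y₂ P| ≤ C * (l (Icc a b)).toReal := by
  unfold RiemannSum
  rw [← Finset.sum_sub_distrib]
  calc |∑ i ∈ Finset.range P.k, (ν (y₁ (P.tag i)) (Icc (P.t i) (P.t (i + 1)))
        - ν' (y₂ (P.tag i)) (Icc (P.t i) (P.t (i + 1))))|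
      ≤ ∑ i ∈ Finset.range P.k, |ν (y₁ (P.tag i)) (Icc (P.t i) (P.t (i + 1)))
        - ν' (y₂ (P.tag i)) (Icc (P.t i) (P.t (i + 1)))| := Finset.abs_sum_le_sum_abs _ _
    _ ≤ ∑ i ∈ Finset.range P.k, C * (l (Icc (P.t i) (P.t (i + 1)))).toReal :=
        Finset.sum_le_sum fun i hi => h i (Finset.mem_range.1 hi)
    _ = C * ∑ i ∈ Finset.range P.k, (l (Icc (P.t i) (P.t (i + 1)))).toReal := by
        rw [Finset.mul_sum]
    _ ≤ C * (l (Icc a b)).toReal :=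
        mul_le_mul_of_nonneg_left (sum_toReal_icc_le l hatom P hfin) hC

theorem sum_regroup {M : Type*} [AddCommMonoid M] (f : ℕ → M) (φ : ℕ → ℕ) (hφ0 : φ 0 = 0)
    {k : ℕ} (hmono : ∀ i < k, φ i ≤ φ (i + 1)) :
    ∑ j ∈ Finset.range (φ k), f j
      = ∑ i ∈ Finset.range k, ∑ j ∈ Finset.Ico (φ i) (φ (i + 1)), f j := by
  induction k with
  | zero => simp [hφ0]
  | succ k ih =>
    have hm : ∀ i < k, φ i ≤ φ (i + 1) := fun i hi => hmono i (hi.trans (Nat.lt_succ_self k))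
    rw [Finset.sum_range_succ, ← ih hm]
    simp only [Finset.range_eq_Ico]
    rw [← Finset.sum_Ico_consecutive _ (Nat.zero_le (φ k)) (hmono k (Nat.lt_succ_self k))]

theorem riemannSum_refine {ν : E → Set ℝ → ℝ} (hν : ∀ v : E, IsBMeasure (ν v)) (y : ℝ → E)
    {a b : ℝ} (P R : TaggedPartition a b) (φ : ℕ → ℕ) (hφ0 : φ 0 = 0) (hφk : φ P.k = R.k)
    (hφlt : ∀ i < P.k, φ i < φ (i + 1)) (hnodes : ∀ i ≤ P.k, R.t (φ i) = P.t i)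
    {C : ℝ} (hC : 0 ≤ C) (l : Measure ℝ) (hatom : ∀ x : ℝ, l {x} = 0)
    (hfin : l (Icc a b) ≠ ⊤)
    (hpair : ∀ i < P.k, ∀ j, φ i ≤ j → j < φ (i + 1) →
      |ν (y (R.tag j)) (Icc (R.t j) (R.t (j + 1)))
        - ν (y (P.tag i)) (Icc (R.t j) (R.t (j + 1)))|
          ≤ C * (l (Icc (R.t j) (R.t (j + 1)))).toReal) :
    |RiemannSum ν y R - RiemannSum ν y P| ≤ C * (l (Icc a b)).toReal := by
  have hφle : ∀ i < P.k, φ i ≤ φ (i + 1) := fun i hi => (hφlt i hi).le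
  have hφub : ∀ i, i ≤ P.k → φ i ≤ R.k := by
    intro i hi
    rw [← hφk]
    exact chain_mono φ hφle i P.k hi le_rfl
  have hRS : RiemannSum ν y R = ∑ i ∈ Finset.range P.k, ∑ j ∈ Finset.Ico (φ i) (φ (i + 1)),
      ν (y (R.tag j)) (Icc (R.t j) (R.t (j + 1))) := by
    unfold RiemannSum
    rw [← hφk]
    exact sum_regroup _ φ hφ0 hφle
  have hP : RiemannSum ν y P = ∑ i ∈ Finset.range P.k, ∑ j ∈ Finset.Ico (φ i) (φ (i + 1)),
      ν (y (P.tag i)) (Icc (R.t j) (R.t (j + 1))) := by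
    unfold RiemannSum
    apply Finset.sum_congr rfl
    intro i hi
    have hi' : i < P.k := Finset.mem_range.1 hi
    have htel := (hν (y (P.tag i))).icc_telescope R.t (hφle i hi')
      (fun j _ hj => R.t_le j (lt_of_lt_of_le hj (hφub (i+1) hi')))
    rw [hnodes i hi'.le, hnodes (i+1) hi'] at htel
    exact htel
  rw [hRS, hP, ← Finset.sum_sub_distrib]
  calc |∑ i ∈ Finset.range P.k, (∑ j ∈ Finset.Ico (φ i) (φ (i + 1)),
        ν (y (R.tag j)) (Icc (R.t j) (R.t (j + 1)))
        - ∑ j ∈ Finset.Ico (φ i) (φ (i + 1)), ν (y (P.tag i)) (Icc (R.t j) (R.t (j + 1))))|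
      ≤ ∑ i ∈ Finset.range P.k, ∑ j ∈ Finset.Ico (φ i) (φ (i + 1)),
          |ν (y (R.tag j)) (Icc (R.t j) (R.t (j + 1)))
            - ν (y (P.tag i)) (Icc (R.t j) (R.t (j + 1)))| := by
        refine le_trans (Finset.abs_sum_le_sum_abs _ _) (Finset.sum_le_sum fun i _ => ?_)
        rw [← Finset.sum_sub_distrib]
        exact Finset.abs_sum_le_sum_abs _ _
    _ ≤ ∑ i ∈ Finset.range P.k, ∑ j ∈ Finset.Ico (φ i) (φ (i + 1)),
          C * (l (Icc (R.t j) (R.t (j + 1)))).toReal := by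
        refine Finset.sum_le_sum fun i hi => Finset.sum_le_sum fun j hj => ?_
        obtain ⟨h1, h2⟩ := Finset.mem_Ico.1 hj
        exact hpair i (Finset.mem_range.1 hi) j h1 h2
    _ = C * ∑ j ∈ Finset.range R.k, (l (Icc (R.t j) (R.t (j + 1)))).toReal := by
        rw [← hφk, sum_regroup (fun j => (l (Icc (R.t j) (R.t (j + 1)))).toReal) φ hφ0 hφle,
          Finset.mul_sum]
        exact Finset.sum_congr rfl fun i _ => by rw [Finset.mul_sum]
    _ ≤ C * (l (Icc a b)).toReal :=
        mul_le_mul_of_nonneg_left (sum_toReal_icc_le l hatom R hfin) hC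

end Part6

section Part7

theorem exists_common_refinement {a b : ℝ} (P Q : TaggedPartition a b) :
    ∃ (R : TaggedPartition a b) (φ ψ : ℕ → ℕ),
      (∀ j, R.tag j = R.t j) ∧
      (φ 0 = 0 ∧ φ P.k = R.k ∧ (∀ i < P.k, φ i < φ (i + 1)) ∧ (∀ i ≤ P.k, R.t (φ i) = P.t i)) ∧
      (ψ 0 = 0 ∧ ψ Q.k = R.k ∧ (∀ i < Q.k, ψ i < ψ (i + 1)) ∧ (∀ i ≤ Q.k, R.t (ψ i) = Q.t i)) := by
  classical
  set S : Finset ℝ :=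
    ((Finset.range (P.k + 1)).image P.t) ∪ ((Finset.range (Q.k + 1)).image Q.t) with hS
  set L : List ℝ := S.sort (· ≤ ·) with hL
  have hsort : L.Pairwise (· < ·) := S.sortedLT_sort.pairwise
  have hmemS : ∀ x ∈ L, x ∈ S := fun x hx => (Finset.mem_sort _).1 hx
  have hmemL : ∀ x ∈ S, x ∈ L := fun x hx => (Finset.mem_sort _).2 hx
  have hbound : ∀ x ∈ S, a ≤ x ∧ x ≤ b := by
    intro x hx
    rw [hS, Finset.mem_union] at hx
    rcases hx with hx | hx <;>
    · obtain ⟨i, hi, rfl⟩ := Finset.mem_image.1 hx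
      rw [Finset.mem_range, Nat.lt_succ_iff] at hi
      first
        | exact ⟨P.a_le_t hi, P.t_le_b hi⟩
        | exact ⟨Q.a_le_t hi, Q.t_le_b hi⟩
  have haS : a ∈ S := by
    rw [hS, Finset.mem_union]
    exact Or.inl (Finset.mem_image.2 ⟨0, Finset.mem_range.2 (Nat.succ_pos _), P.left⟩)
  have hbS : b ∈ S := by
    rw [hS, Finset.mem_union]
    exact Or.inl (Finset.mem_image.2 ⟨P.k, Finset.mem_range.2 (Nat.lt_succ_self _), P.right⟩)
  have hab : a < b := P.a_lt_b
  have hlen : L.length = S.card := Finset.length_sort _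
  have hlen2 : 2 ≤ L.length := by
    rw [hlen]
    exact Finset.one_lt_card.2 ⟨a, haS, b, hbS, hab.ne⟩
  set T : ℕ → ℝ := fun i => L.getD i b with hT
  have hTget : ∀ {i : ℕ} (h : i < L.length), T i = L.get ⟨i, h⟩ := by
    intro i h
    rw [hT]
    exact List.getD_eq_get (l := L) (d := b) ⟨i, h⟩
  have hTmono : ∀ {i j : ℕ}, i < j → (h : j < L.length) → T i < T j := by
    intro i j hij hj
    rw [hTget (hij.trans hj), hTget hj]
    exact hsort.rel_get_of_lt hij
  have hTmemS : ∀ {i : ℕ}, i < L.length → T i ∈ S := by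
    intro i hi
    rw [hTget hi]
    exact hmemS _ (List.get_mem L _)
  have hTidx : ∀ x ∈ S, L.idxOf x < L.length ∧ T (L.idxOf x) = x := by
    intro x hx
    have hxL : x ∈ L := hmemL x hx
    have h1 : L.idxOf x < L.length := List.idxOf_lt_length_iff.2 hxL
    exact ⟨h1, by rw [hTget h1]; exact List.idxOf_get h1⟩
  have hTinj : ∀ {i j : ℕ}, i < L.length → j < L.length → T i = T j → i = j := by
    intro i j hi hj hij
    rcases lt_trichotomy i j with h | h | h
    · exact absurd hij (hTmono h hj).ne
    · exact h
    · exact absurd hij.symm (hTmono h hi).ne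
  have hT0 : T 0 = a := by
    obtain ⟨hia, hia2⟩ := hTidx a haS
    rcases Nat.eq_zero_or_pos (L.idxOf a) with h | h
    · rw [← h]; exact hia2
    · exfalso
      have h1 : T 0 < T (L.idxOf a) := hTmono h hia
      rw [hia2] at h1
      exact absurd (hbound _ (hTmemS (lt_of_le_of_lt (Nat.zero_le _) hia))).1 h1.not_ge
  have hTlast : T (L.length - 1) = b := by
    obtain ⟨hib, hib2⟩ := hTidx b hbS
    rcases Nat.lt_or_ge (L.idxOf b) (L.length - 1) with h | h
    · exfalso
      have h1 : T (L.idxOf b) < T (L.length - 1) := hTmono h (by omega)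
      rw [hib2] at h1
      exact absurd (hbound _ (hTmemS (by omega))).2 h1.not_ge
    · have : L.idxOf b = L.length - 1 := by omega
      rw [← this]; exact hib2
  set R : TaggedPartition a b := {
    k := L.length - 1
    k_pos := by omega
    t := T
    tag := T
    left := hT0
    right := hTlast
    lt := fun i hi => hTmono (Nat.lt_succ_self i) (by omega)
    tag_mem := fun i hi => ⟨le_rfl, (hTmono (Nat.lt_succ_self i) (by omega)).le⟩ } with hR
  have hRk : R.k = L.length - 1 := rfl
  have hnode : ∀ (k' : ℕ) (tt : ℕ → ℝ), (∀ i ≤ k', tt i ∈ S) → (∀ i < k', tt i < tt (i+1)) →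
      tt 0 = a → tt k' = b →
      ∃ φ : ℕ → ℕ, φ 0 = 0 ∧ φ k' = R.k ∧ (∀ i < k', φ i < φ (i + 1)) ∧
        (∀ i ≤ k', R.t (φ i) = tt i) := by
    intro k' tt htS htlt ht0 htk
    refine ⟨fun i => L.idxOf (tt i), ?_, ?_, ?_, ?_⟩
    · have h := hTidx (tt 0) (htS 0 (Nat.zero_le _))
      refine hTinj h.1 (by omega) ?_
      rw [h.2, hT0, ht0]
    · have h := hTidx (tt k') (htS k' le_rfl)
      refine hTinj h.1 (by rw [hRk]; omega) ?_
      rw [h.2, hRk, hTlast, htk]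
    · intro i hi
      have h1 := hTidx (tt i) (htS i hi.le)
      have h2 := hTidx (tt (i+1)) (htS (i+1) hi)
      have hlt := htlt i hi
      by_contra hcon
      push_neg at hcon
      rcases Nat.eq_or_lt_of_le hcon with h | h
      · have heq : tt (i+1) = tt i := by rw [← h1.2, ← h2.2, h]
        exact absurd heq (ne_of_gt hlt)
      · have hlt2 := hTmono h h1.1
        rw [h1.2, h2.2] at hlt2
        exact lt_asymm hlt2 hlt
    · intro i hi
      exact (hTidx (tt i) (htS i hi)).2
  obtain ⟨φ, hφ⟩ := hnode P.k P.t
    (fun i hi => by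
      rw [hS, Finset.mem_union]
      exact Or.inl (Finset.mem_image.2 ⟨i, Finset.mem_range.2 (by omega), rfl⟩))
    P.lt P.left P.right
  obtain ⟨ψ, hψ⟩ := hnode Q.k Q.t
    (fun i hi => by
      rw [hS, Finset.mem_union]
      exact Or.inr (Finset.mem_image.2 ⟨i, Finset.mem_range.2 (by omega), rfl⟩))
    Q.lt Q.left Q.right
  exact ⟨R, φ, ψ, fun j => rfl, hφ, hψ⟩

end Part7

section Part8
variable {E : Type*} [NormedAddCommGroup E]

theorem meshLT_mono {a b δ δ' : ℝ} {P : TaggedPartition a b} (h : P.MeshLT δ) (hδ : δ ≤ δ') :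
    P.MeshLT δ' := fun i hi => lt_of_lt_of_le (h i hi) hδ

theorem riemannSum_close {ν : E → Set ℝ → ℝ} (hν : ∀ v : E, IsBMeasure (ν v))
    {y : ℝ → E} {a b : ℝ} (l : Measure ℝ) (hatom : ∀ x : ℝ, l {x} = 0)
    (hfin : l (Icc a b) ≠ ⊤)
    {ω θ : ℝ → ℝ} (hωmono : MonotoneOn ω (Ici 0)) (hωnn : ∀ x, 0 ≤ x → 0 ≤ ω x)
    (hθmono : MonotoneOn θ (Ici 0)) (hθnn : ∀ x, 0 ≤ x → 0 ≤ θ x)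
    (hyθ : ∀ s ∈ Icc a b, ∀ s' ∈ Icc a b, ‖y s - y s'‖ ≤ θ |s - s'|)
    (hld : ∀ s ∈ Icc a b, ∀ s' ∈ Icc a b, DiffLE (ν (y s)) (ν (y s')) (ω ‖y s - y s'‖) l)
    {δ : ℝ} (hδ : 0 < δ) (P Q : TaggedPartition a b) (hP : P.MeshLT δ) (hQ : Q.MeshLT δ) :
    |RiemannSum ν y P - RiemannSum ν y Q| ≤ 2 * (ω (θ δ) * (l (Icc a b)).toReal) := by
  obtain ⟨R, φ, ψ, htag, ⟨hφ0, hφk, hφlt, hφn⟩, ⟨hψ0, hψk, hψlt, hψn⟩⟩ :=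
    exists_common_refinement P Q
  have hC : 0 ≤ ω (θ δ) := hωnn _ (hθnn δ hδ.le)
  have key : ∀ (W : TaggedPartition a b) (χ : ℕ → ℕ), W.MeshLT δ → χ 0 = 0 → χ W.k = R.k →
      (∀ i < W.k, χ i < χ (i + 1)) → (∀ i ≤ W.k, R.t (χ i) = W.t i) →
      |RiemannSum ν y R - RiemannSum ν y W| ≤ ω (θ δ) * (l (Icc a b)).toReal := by
    intro W χ hW hχ0 hχk hχlt hχn
    apply riemannSum_refine hν y W R χ hχ0 hχk hχlt hχn hC l hatom hfin
    intro i hi j hj1 hj2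
    have hχub : χ (i + 1) ≤ R.k := by
      rw [← hχk]
      exact chain_mono χ (fun i' hi' => (hχlt i' hi').le) (i+1) W.k hi le_rfl
    have hjR : j < R.k := lt_of_lt_of_le hj2 hχub
    have hjl : W.t i ≤ R.t j := by
      rw [← hχn i hi.le]
      exact R.t_mono hj1 hjR.le
    have hjr : R.t j ≤ W.t (i + 1) := by
      rw [← hχn (i+1) hi]
      exact R.t_mono hj2.le hχub
    have hτ : R.tag j ∈ Icc a b := by
      rw [htag j]
      exact ⟨le_trans (W.a_le_t hi.le) hjl, le_trans hjr (W.t_le_b hi)⟩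
    have hτ' : W.tag i ∈ Icc a b := W.tag_mem_Icc hi
    have hdist : |R.tag j - W.tag i| ≤ δ := by
      obtain ⟨hm1, hm2⟩ := W.tag_mem i hi
      rw [htag j, abs_le]
      constructor
      · have := hW i hi; nlinarith
      · have := hW i hi; nlinarith
    have hnorm : ‖y (R.tag j) - y (W.tag i)‖ ≤ θ δ := by
      refine le_trans (hyθ _ hτ _ hτ') (hθmono (Set.mem_Ici.2 (abs_nonneg _)) (Set.mem_Ici.2 hδ.le) hdist)
    have h1 := (hld _ hτ _ hτ').abs_le (A := Icc (R.t j) (R.t (j+1)))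
      (Metric.isBounded_Icc _ _) measurableSet_Icc
    refine le_trans h1 (mul_le_mul_of_nonneg_right ?_ ENNReal.toReal_nonneg)
    exact hωmono (Set.mem_Ici.2 (norm_nonneg _)) (Set.mem_Ici.2 (hθnn δ hδ.le)) hnorm
  have h1 := key P φ hP hφ0 hφk hφlt hφn
  have h2 := key Q ψ hQ hψ0 hψk hψlt hψn
  calc |RiemannSum ν y P - RiemannSum ν y Q|
      ≤ |RiemannSum ν y P - RiemannSum ν y R| + |RiemannSum ν y R - RiemannSum ν y Q| :=
        abs_sub_le _ _ _
    _ = |RiemannSum ν y R - RiemannSum ν y P| + |RiemannSum ν y R - RiemannSum ν y Q| := by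
        rw [abs_sub_comm (RiemannSum ν y P) (RiemannSum ν y R)]
    _ ≤ _ := by linarith

theorem modulus_small {ω θ : ℝ → ℝ} (hωnn : ∀ x, 0 ≤ x → 0 ≤ ω x)
    (hθnn : ∀ x, 0 ≤ x → 0 ≤ θ x)
    (hωcont : ContinuousWithinAt ω (Ici 0) 0) (hω0 : ω 0 = 0)
    (hθcont : ContinuousWithinAt θ (Ici 0) 0) (hθ0 : θ 0 = 0)
    (c : ℝ) {ε : ℝ} (hε : 0 < ε) :
    ∃ δ > 0, ∀ x, 0 ≤ x → x ≤ δ → ω (θ x) * c < ε := by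
  have hg : ContinuousWithinAt (fun x => ω (θ x)) (Ici 0) 0 := by
    have hmap : MapsTo θ (Ici 0) (Ici 0) := fun x hx => hθnn x hx
    have hω' : ContinuousWithinAt ω (Ici 0) (θ 0) := by rw [hθ0]; exact hωcont
    exact hω'.comp hθcont hmap
  have hc' : (0:ℝ) < |c| + 1 := by positivity
  have hg' := Metric.tendsto_nhdsWithin_nhds.1 hg (ε / (|c| + 1)) (by positivity)
  obtain ⟨δ, hδpos, hδ⟩ := hg'
  refine ⟨δ / 2, by positivity, fun x hx hxδ => ?_⟩
  have hgx : ω (θ x) < ε / (|c| + 1) := by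
    have h0 := hδ (x := x) hx (by rw [Real.dist_eq, sub_zero, abs_of_nonneg hx]; linarith)
    have h1 : |ω (θ x) - ω (θ 0)| < ε / (|c| + 1) := by
      simpa [Real.dist_eq] using h0
    rw [hθ0, hω0, sub_zero] at h1
    calc ω (θ x) ≤ |ω (θ x)| := le_abs_self _
      _ < ε / (|c| + 1) := h1
  have hωnn' : 0 ≤ ω (θ x) := hωnn _ (hθnn _ hx)
  calc ω (θ x) * c ≤ ω (θ x) * |c| := mul_le_mul_of_nonneg_left (le_abs_self c) hωnn'
    _ ≤ ω (θ x) * (|c| + 1) :=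
        mul_le_mul_of_nonneg_left (le_add_of_nonneg_right zero_le_one) hωnn'
    _ < (ε / (|c| + 1)) * (|c| + 1) := mul_lt_mul_of_pos_right hgx hc'
    _ = ε := by field_simp

theorem exists_isCurveIntegral {ν : E → Set ℝ → ℝ} (hν : ∀ v : E, IsBMeasure (ν v))
    {y : ℝ → E} {a b : ℝ} (hab : a < b) (l : Measure ℝ) (hatom : ∀ x : ℝ, l {x} = 0)
    (hfin : l (Icc a b) ≠ ⊤)
    {ω θ : ℝ → ℝ} (hωmono : MonotoneOn ω (Ici 0)) (hωnn : ∀ x, 0 ≤ x → 0 ≤ ω x)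
    (hωcont : ContinuousWithinAt ω (Ici 0) 0) (hω0 : ω 0 = 0)
    (hθmono : MonotoneOn θ (Ici 0)) (hθnn : ∀ x, 0 ≤ x → 0 ≤ θ x)
    (hθcont : ContinuousWithinAt θ (Ici 0) 0) (hθ0 : θ 0 = 0)
    (hyθ : ∀ s ∈ Icc a b, ∀ s' ∈ Icc a b, ‖y s - y s'‖ ≤ θ |s - s'|)
    (hld : ∀ s ∈ Icc a b, ∀ s' ∈ Icc a b, DiffLE (ν (y s)) (ν (y s')) (ω ‖y s - y s'‖) l) :
    ∃ L, IsCurveIntegral ν y a b L := by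
  have hsmall : ∀ ε : ℝ, 0 < ε → ∃ δ > 0, 2 * (ω (θ δ) * (l (Icc a b)).toReal) < ε := by
    intro ε hε
    obtain ⟨δ, hδpos, hδ⟩ := modulus_small hωnn hθnn hωcont hω0 hθcont hθ0
      ((l (Icc a b)).toReal) (half_pos hε)
    refine ⟨δ, hδpos, ?_⟩
    have := hδ δ hδpos.le le_rfl
    linarith
  have hPn : ∀ n : ℕ, ∃ P : TaggedPartition a b, P.MeshLT (1 / (n + 1)) := fun n =>
    exists_taggedPartition hab (by positivity)
  set Pseq : (n : ℕ) → TaggedPartition a b := fun n => (hPn n).choose with hPseq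
  have hPmesh : ∀ n : ℕ, (Pseq n).MeshLT (1 / (n + 1)) := fun n => (hPn n).choose_spec
  have hest : ∀ (δ : ℝ), 0 < δ → ∀ (P Q : TaggedPartition a b), P.MeshLT δ → Q.MeshLT δ →
      dist (RiemannSum ν y P) (RiemannSum ν y Q) ≤ 2 * (ω (θ δ) * (l (Icc a b)).toReal) := by
    intro δ hδ P Q hP hQ
    rw [Real.dist_eq]
    exact riemannSum_close hν l hatom hfin hωmono hωnn hθmono hθnn hyθ hld hδ P Q hP hQ
  have hcauchy : CauchySeq (fun n => RiemannSum ν y (Pseq n)) := by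
    rw [Metric.cauchySeq_iff]
    intro ε hε
    obtain ⟨δ, hδpos, hδ⟩ := hsmall ε hε
    obtain ⟨N, hN⟩ := exists_nat_one_div_lt hδpos
    refine ⟨N, fun m hm n hn => ?_⟩
    have hmesh : ∀ p : ℕ, N ≤ p → (Pseq p).MeshLT δ := by
      intro p hp
      refine meshLT_mono (hPmesh p) ?_
      calc (1:ℝ) / (p + 1) ≤ 1 / (N + 1) := by
            apply div_le_div_of_nonneg_left one_pos.le (by positivity)
            exact_mod_cast Nat.succ_le_succ hp
        _ ≤ δ := hN.le
    exact lt_of_le_of_lt (hest δ hδpos _ _ (hmesh m hm) (hmesh n hn)) hδ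
  obtain ⟨L, hL⟩ := cauchySeq_tendsto_of_complete hcauchy
  refine ⟨L, ?_⟩
  intro ε hε
  obtain ⟨δ, hδpos, hδ⟩ := hsmall (ε / 2) (half_pos hε)
  refine ⟨δ, hδpos, fun P hm => ?_⟩
  obtain ⟨N1, hN1⟩ := (Metric.tendsto_atTop.1 hL) (ε / 4) (by linarith)
  obtain ⟨N2, hN2⟩ := exists_nat_one_div_lt hδpos
  set n := max N1 N2 with hn
  have hmesh : (Pseq n).MeshLT δ := by
    refine meshLT_mono (hPmesh n) ?_
    calc (1:ℝ) / (n + 1) ≤ 1 / (N2 + 1) := by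
          apply div_le_div_of_nonneg_left one_pos.le (by positivity)
          exact_mod_cast Nat.succ_le_succ (le_max_right N1 N2)
      _ ≤ δ := hN2.le
  calc |L - RiemannSum ν y P|
      ≤ |L - RiemannSum ν y (Pseq n)| + |RiemannSum ν y (Pseq n) - RiemannSum ν y P| :=
        abs_sub_le _ _ _
    _ < ε / 4 + ε / 2 := by
        apply add_lt_add_of_lt_of_le
        · rw [abs_sub_comm, ← Real.dist_eq]
          exact hN1 n (le_max_left _ _)
        · exact le_trans (by rw [← Real.dist_eq]; exact hest δ hδpos _ _ hmesh hm) hδ.le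
    _ < ε := by linarith

end Part8

section Part9
variable {E : Type*} [NormedAddCommGroup E]

theorem abs_eq_zero_of_forall_lt {x : ℝ} (h : ∀ ε : ℝ, 0 < ε → |x| < ε) : x = 0 := by
  by_contra hx
  exact absurd (h |x| (abs_pos.2 hx)) (lt_irrefl _)

/-- splitting an integral into three blocks when the curve is constant on the outer blocks -/
theorem isCurveIntegral_three_split {ν : E → Set ℝ → ℝ} (hν : ∀ v : E, IsBMeasure (ν v))
    {z : ℝ → E} {p₁ c₁ c₂ p₂ : ℝ} (h1 : p₁ < c₁) (h2 : c₁ < c₂) (h3 : c₂ < p₂)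
    {v₁ v₂ : E} {Lf Lm : ℝ}
    (hz1 : ∀ s ∈ Icc p₁ c₁, z s = v₁) (hz2 : ∀ s ∈ Icc c₂ p₂, z s = v₂)
    (hf : IsCurveIntegral ν z p₁ p₂ Lf) (hm : IsCurveIntegral ν z c₁ c₂ Lm) :
    Lf = ν v₁ (Icc p₁ c₁) + Lm + ν v₂ (Icc c₂ p₂) := by
  have key : ∀ ε : ℝ, 0 < ε → |Lf - (ν v₁ (Icc p₁ c₁) + Lm + ν v₂ (Icc c₂ p₂))| < ε := by
    intro ε hε
    obtain ⟨δf, hδf, hPf⟩ := hf (ε / 2) (by linarith)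
    obtain ⟨δm, hδm, hPm⟩ := hm (ε / 2) (by linarith)
    set δ := min δf δm with hδdef
    have hδ : 0 < δ := lt_min hδf hδm
    obtain ⟨P1, hP1⟩ := exists_taggedPartition h1 hδ
    obtain ⟨Pm, hPmm⟩ := exists_taggedPartition h2 hδ
    obtain ⟨P2, hP2⟩ := exists_taggedPartition h3 hδ
    set R : TaggedPartition p₁ p₂ := (P1.trans Pm).trans P2 with hR
    have hRm : R.MeshLT δf :=
      meshLT_mono (TaggedPartition.trans_meshLT (TaggedPartition.trans_meshLT hP1 hPmm) hP2)
        (min_le_left _ _)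
    have hRS : RiemannSum ν z R
        = ν v₁ (Icc p₁ c₁) + RiemannSum ν z Pm + ν v₂ (Icc c₂ p₂) := by
      rw [hR, TaggedPartition.trans_riemannSum, TaggedPartition.trans_riemannSum,
        riemannSum_const hν hz1 P1, riemannSum_const hν hz2 P2]
    have e1 : |Lf - RiemannSum ν z R| < ε / 2 := hPf R hRm
    have e2 : |Lm - RiemannSum ν z Pm| < ε / 2 := hPm Pm (meshLT_mono hPmm (min_le_right _ _))
    rw [hRS] at e1
    calc |Lf - (ν v₁ (Icc p₁ c₁) + Lm + ν v₂ (Icc c₂ p₂))|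
        = |(Lf - (ν v₁ (Icc p₁ c₁) + RiemannSum ν z Pm + ν v₂ (Icc c₂ p₂)))
            + (RiemannSum ν z Pm - Lm)| := by ring_nf
      _ ≤ |Lf - (ν v₁ (Icc p₁ c₁) + RiemannSum ν z Pm + ν v₂ (Icc c₂ p₂))|
            + |RiemannSum ν z Pm - Lm| := abs_add_le _ _
      _ < ε / 2 + ε / 2 := by
            apply add_lt_add e1
            rw [abs_sub_comm]; exact e2
      _ = ε := by ring
  have := abs_eq_zero_of_forall_lt key
  linarith [abs_nonneg (Lf - (ν v₁ (Icc p₁ c₁) + Lm + ν v₂ (Icc c₂ p₂))), this]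

/-- two integrals whose Riemann sums are uniformly close are close -/
theorem isCurveIntegral_dist_le {ν ν' : E → Set ℝ → ℝ} {z₁ z₂ : ℝ → E} {a b L₁ L₂ B : ℝ}
    (hab : a < b) (h₁ : IsCurveIntegral ν z₁ a b L₁) (h₂ : IsCurveIntegral ν' z₂ a b L₂)
    (hRS : ∀ P : TaggedPartition a b, |RiemannSum ν z₁ P - RiemannSum ν' z₂ P| ≤ B) :
    |L₁ - L₂| ≤ B := by
  have key : ∀ ε : ℝ, 0 < ε → |L₁ - L₂| < B + ε := by
    intro ε hε
    obtain ⟨δ₁, hδ₁, hP₁⟩ := h₁ (ε / 2) (by linarith)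
    obtain ⟨δ₂, hδ₂, hP₂⟩ := h₂ (ε / 2) (by linarith)
    obtain ⟨P, hP⟩ := exists_taggedPartition hab (lt_min hδ₁ hδ₂)
    have e1 := hP₁ P (meshLT_mono hP (min_le_left _ _))
    have e2 := hP₂ P (meshLT_mono hP (min_le_right _ _))
    have e3 := hRS P
    calc |L₁ - L₂| = |(L₁ - RiemannSum ν z₁ P) + (RiemannSum ν z₁ P - RiemannSum ν' z₂ P)
        + (RiemannSum ν' z₂ P - L₂)| := by ring_nf
      _ ≤ |L₁ - RiemannSum ν z₁ P| + |RiemannSum ν z₁ P - RiemannSum ν' z₂ P|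
          + |RiemannSum ν' z₂ P - L₂| := abs_add_three _ _ _
      _ < ε / 2 + B + ε / 2 := by
          have e2' : |RiemannSum ν' z₂ P - L₂| < ε / 2 := by rw [abs_sub_comm]; exact e2
          linarith
      _ = B + ε := by ring
  by_contra hcon
  push_neg at hcon
  have := key ((|L₁ - L₂| - B) / 2) (by linarith)
  linarith

theorem toReal_lt_of_meas_lt {m : MeasureTheory.Measure ℝ} {A : Set ℝ} {ε : ℝ}
    (h : m A < ENNReal.ofReal ε) : (m A).toReal < ε :=
  ENNReal.toReal_lt_of_lt_ofReal h

end Part9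

section ClampSec

/-- the clamp function to `[q₁,q₂]` -/
noncomputable def clampF (q₁ q₂ : ℝ) : ℝ → ℝ := fun s => max q₁ (min s q₂)

theorem clampF_mem {q₁ q₂ : ℝ} (h : q₁ ≤ q₂) (s : ℝ) : clampF q₁ q₂ s ∈ Icc q₁ q₂ :=
  ⟨le_max_left _ _, max_le h (min_le_right _ _)⟩

theorem clampF_lip (q₁ q₂ s s' : ℝ) : |clampF q₁ q₂ s - clampF q₁ q₂ s'| ≤ |s - s'| := by
  unfold clampF
  calc |max q₁ (min s q₂) - max q₁ (min s' q₂)|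
      ≤ max |q₁ - q₁| |min s q₂ - min s' q₂| := abs_max_sub_max_le_max _ _ _ _
    _ = |min s q₂ - min s' q₂| := by
        rw [sub_self, abs_zero, max_eq_right (abs_nonneg _)]
    _ ≤ max |s - s'| |q₂ - q₂| := abs_min_sub_min_le_max _ _ _ _
    _ = |s - s'| := by rw [sub_self, abs_zero, max_eq_left (abs_nonneg _)]

theorem clampF_of_mem {q₁ q₂ : ℝ} (s : ℝ) (hs : s ∈ Icc q₁ q₂) : clampF q₁ q₂ s = s := by
  unfold clampF
  rw [min_eq_left hs.2, max_eq_right hs.1]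

theorem clampF_of_le {q₁ q₂ : ℝ} (h : q₁ ≤ q₂) (s : ℝ) (hs : s ≤ q₁) : clampF q₁ q₂ s = q₁ := by
  unfold clampF
  rw [min_eq_left (hs.trans h), max_eq_left hs]

theorem clampF_of_ge {q₁ q₂ : ℝ} (h : q₁ ≤ q₂) (s : ℝ) (hs : q₂ ≤ s) : clampF q₁ q₂ s = q₂ := by
  unfold clampF
  rw [min_eq_right hs, max_eq_right h]

theorem clampF_continuous (q₁ q₂ : ℝ) : Continuous (clampF q₁ q₂) :=
  continuous_const.max (continuous_id.min continuous_const)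

end ClampSec

theorem stmt14 {N : ℕ} (ω : ℕ → ℝ → ℝ) (hω : IsModulusFamily ω)
    (Θ : ℕ → ℚ → ℚ → ℝ → ℝ) (hΘ : IsSuitableModuli Θ)
    (ν : ℕ → EuclideanSpace ℝ (Fin N) → Set ℝ → ℝ)
    (ν₀ : EuclideanSpace ℝ (Fin N) → Set ℝ → ℝ)
    (hν : ∀ n, IsParamBMeasure ω (ν n)) (hν₀ : IsParamBMeasure ω ν₀)
    (mB : ℕ → ℕ → Measure ℝ) (mB0 : ℕ → Measure ℝ)
    (hmB : ∀ n j, 1 ≤ j → HasMBound (ν n) j (mB n j))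
    (hmB0 : ∀ j, 1 ≤ j → HasMBound ν₀ j (mB0 j))
    (hmeq : ∀ j, 1 ≤ j → ∀ ε > (0 : ℝ), ∃ δ > (0 : ℝ), ∀ s t : ℝ,
      0 ≤ t - s → t - s < δ →
        (∀ n, mB n j (Set.Icc s t) < ENNReal.ofReal ε) ∧
        mB0 j (Set.Icc s t) < ENNReal.ofReal ε)
    (tseq : ℕ → ℝ) (t₀ : ℝ) (ht : Tendsto tseq atTop (𝓝 t₀))
    (hconv : SigmaThetaTendsto Θ ν ν₀) :
    SigmaThetaTendsto Θ (fun n => BTranslate (ν n) (tseq n)) (BTranslate ν₀ t₀) := by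
  intro j q₁ q₂ hq ε hε
  set j' : ℕ := j + 1 with hj'def
  have hj'1 : 1 ≤ j' := Nat.le_add_left 1 j
  have hjj' : (j : ℝ) ≤ (j' : ℝ) := by exact_mod_cast Nat.le_succ j
  set ε₁ : ℝ := ε / 8 with hε₁def
  have hε₁ : 0 < ε₁ := by positivity
  have hq' : (q₁ : ℝ) ≤ (q₂ : ℝ) := by exact_mod_cast hq.le
  have hqlt : (q₁ : ℝ) < (q₂ : ℝ) := by exact_mod_cast hq
  -- l-bound for ν₀ at level j'
  obtain ⟨m₀', l₀, hm₀', hl₀⟩ := hν₀.2 j' hj'1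
  -- equicontinuity at level j'
  obtain ⟨δm, hδm, hmsmall⟩ := hmeq j' hj'1 ε₁ hε₁
  -- rational endpoints
  obtain ⟨p₁, hp₁⟩ := exists_rat_lt (min (q₁ : ℝ) ((q₁ : ℝ) + t₀ - 1))
  obtain ⟨p₂, hp₂⟩ := exists_rat_gt (max (q₂ : ℝ) ((q₂ : ℝ) + t₀ + 1))
  have hp₁q : (p₁ : ℝ) < q₁ := lt_of_lt_of_le hp₁ (min_le_left _ _)
  have hp₁t : (p₁ : ℝ) < (q₁ : ℝ) + t₀ - 1 := lt_of_lt_of_le hp₁ (min_le_right _ _)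
  have hp₂q : (q₂ : ℝ) < p₂ := lt_of_le_of_lt (le_max_left _ _) hp₂
  have hp₂t : (q₂ : ℝ) + t₀ + 1 < p₂ := lt_of_le_of_lt (le_max_right _ _) hp₂
  have hp₁p₂ : (p₁ : ℝ) < (p₂ : ℝ) := by linarith
  have hp₁p₂ℚ : p₁ < p₂ := by exact_mod_cast hp₁p₂
  have hp₁qℚ : p₁ ≤ q₁ := by exact_mod_cast hp₁q.le
  have hp₂qℚ : q₂ ≤ p₂ := by exact_mod_cast hp₂q.le
  set δ' : ℝ := min δm 1 / 2 with hδ'def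
  have hδ'pos : 0 < δ' := by
    have : (0:ℝ) < min δm 1 := lt_min hδm one_pos
    positivity
  have hδ'δm : δ' ≤ δm / 2 := by
    have : min δm 1 ≤ δm := min_le_left _ _
    rw [hδ'def]; linarith
  have hδ'1 : δ' ≤ 1 / 2 := by
    have : min δm 1 ≤ 1 := min_le_right _ _
    rw [hδ'def]; linarith
  obtain ⟨r₁, hr₁a, hr₁b⟩ := exists_rat_btwn (sub_lt_self ((q₁ : ℝ) + t₀) hδ'pos)
  obtain ⟨r₂, hr₂a, hr₂b⟩ := exists_rat_btwn (lt_add_of_pos_right ((q₂ : ℝ) + t₀) hδ'pos)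
  have hp₁r₁ : (p₁ : ℝ) < r₁ := by linarith
  have hr₂p₂ : (r₂ : ℝ) < p₂ := by linarith
  have hp₁r₁ℚ : p₁ < r₁ := by exact_mod_cast hp₁r₁
  have hr₂p₂ℚ : r₂ < p₂ := by exact_mod_cast hr₂p₂
  -- three applications of σ_Θ convergence
  obtain ⟨n₁, hn₁⟩ := hconv j' p₁ p₂ hp₁p₂ℚ ε₁ hε₁
  obtain ⟨n₂, hn₂⟩ := hconv j' p₁ r₁ hp₁r₁ℚ ε₁ hε₁
  obtain ⟨n₃, hn₃⟩ := hconv j' r₂ p₂ hr₂p₂ℚ ε₁ hε₁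
  -- smallness of the l-bound modulus term
  have hl₀fin : l₀ (Icc (p₁ : ℝ) (p₂ : ℝ)) ≠ ⊤ := by
    have := hl₀.1.1
    exact (isCompact_Icc.measure_lt_top).ne
  obtain ⟨ρ₂, hρ₂pos, hρ₂⟩ := modulus_small (ω := ω j') (θ := Θ j q₁ q₂)
    (hω.nonneg j') (fun x hx => hΘ.nonneg j q₁ q₂ x hq hx)
    (hω.continuousOn j' 0 (mem_Ici.2 le_rfl)) (hω.map_zero j')
    (hΘ.continuousOn j q₁ q₂ hq 0 (mem_Ici.2 le_rfl)) (hΘ.map_zero j q₁ q₂ hq)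
    ((l₀ (Icc (p₁ : ℝ) (p₂ : ℝ))).toReal) hε₁
  set ρ : ℝ := min ρ₂ (min ((q₁ : ℝ) + t₀ - r₁) (min ((r₂ : ℝ) - ((q₂ : ℝ) + t₀))
    (min (δm / 2) (1 / 2)))) with hρdef
  have hρpos : 0 < ρ := by
    refine lt_min hρ₂pos (lt_min (by linarith) (lt_min (by linarith)
      (lt_min (by linarith) (by norm_num))))
  have hρ1 : ρ ≤ ρ₂ := min_le_left _ _
  have hρ2 : ρ ≤ (q₁ : ℝ) + t₀ - r₁ := le_trans (min_le_right _ _) (min_le_left _ _)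
  have hρ3 : ρ ≤ (r₂ : ℝ) - ((q₂ : ℝ) + t₀) :=
    le_trans (min_le_right _ _) (le_trans (min_le_right _ _) (min_le_left _ _))
  have hρ4 : ρ ≤ δm / 2 := le_trans (min_le_right _ _) (le_trans (min_le_right _ _)
    (le_trans (min_le_right _ _) (min_le_left _ _)))
  have hρ5 : ρ ≤ 1 / 2 := le_trans (min_le_right _ _) (le_trans (min_le_right _ _)
    (le_trans (min_le_right _ _) (min_le_right _ _)))
  obtain ⟨n₄, hn₄⟩ := (Metric.tendsto_atTop.1 ht) ρ hρpos
  refine ⟨max (max n₁ n₂) (max n₃ n₄), fun n hn y hy L L₀ HL HL₀ => ?_⟩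
  have hnn₁ : n₁ ≤ n := le_trans (le_trans (le_max_left _ _) (le_max_left _ _)) hn
  have hnn₂ : n₂ ≤ n := le_trans (le_trans (le_max_right _ _) (le_max_left _ _)) hn
  have hnn₃ : n₃ ≤ n := le_trans (le_trans (le_max_left _ _) (le_max_right _ _)) hn
  have hnn₄ : n₄ ≤ n := le_trans (le_trans (le_max_right _ _) (le_max_right _ _)) hn
  set tn : ℝ := tseq n with htndef
  have htn : |tn - t₀| < ρ := by
    have := hn₄ n hnn₄
    rwa [Real.dist_eq] at this
  have htnabs := abs_lt.1 htn
  -- ordering facts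
  have A1 : (p₁ : ℝ) < (q₁ : ℝ) + tn := by linarith
  have A2 : (q₂ : ℝ) + tn < p₂ := by linarith
  have A3 : (r₁ : ℝ) ≤ (q₁ : ℝ) + tn := by linarith
  have A4 : (q₁ : ℝ) + tn - r₁ < δm := by linarith
  have A5 : (q₂ : ℝ) + tn ≤ r₂ := by linarith
  have A6 : (r₂ : ℝ) - ((q₂ : ℝ) + tn) < δm := by linarith
  have A7 : (r₁ : ℝ) ≤ (q₁ : ℝ) + t₀ := hr₁b.le
  have A8 : (q₁ : ℝ) + t₀ - r₁ < δm := by linarith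
  have A9 : (q₂ : ℝ) + t₀ ≤ r₂ := hr₂a.le
  have A10 : (r₂ : ℝ) - ((q₂ : ℝ) + t₀) < δm := by linarith
  have A11 : (p₁ : ℝ) < (q₁ : ℝ) + t₀ := by linarith
  have A12 : (q₂ : ℝ) + t₀ < p₂ := by linarith
  -- curve data
  obtain ⟨hyc, hybd, hymod⟩ := hy
  set cl : ℝ → ℝ := clampF (q₁ : ℝ) (q₂ : ℝ) with hcl
  set yh : ℝ → EuclideanSpace ℝ (Fin N) := fun s => y (cl s) with hyh
  have hyhbd : ∀ s, ‖yh s‖ ≤ (j' : ℝ) :=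
    fun s => le_trans (hybd _ (clampF_mem hq' s)) hjj'
  have hyhmod : ∀ s s' : ℝ, ‖yh s - yh s'‖ ≤ Θ j q₁ q₂ |s - s'| := by
    intro s s'
    refine le_trans (hymod _ (clampF_mem hq' s) _ (clampF_mem hq' s')) ?_
    exact hΘ.monotoneOn j q₁ q₂ hq (mem_Ici.2 (abs_nonneg _)) (mem_Ici.2 (abs_nonneg _)) (clampF_lip _ _ _ _)
  -- the shifted curves belong to the larger K-set
  have hzK : ∀ c : ℝ, (fun s => yh (s - c)) ∈ KSet (EuclideanSpace ℝ (Fin N)) Θ j' p₁ p₂ := by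
    intro c
    refine ⟨?_, fun t _ => hyhbd _, ?_⟩
    · have hcont : Continuous fun s : ℝ => cl (s - c) :=
        (clampF_continuous _ _).comp (continuous_id.sub continuous_const)
      exact hyc.comp hcont.continuousOn (fun s _ => clampF_mem hq' _)
    · intro t₁ _ t₂ _
      have h1 : ‖yh (t₁ - c) - yh (t₂ - c)‖ ≤ Θ j q₁ q₂ |t₁ - t₂| := by
        have := hyhmod (t₁ - c) (t₂ - c)
        have he : t₁ - c - (t₂ - c) = t₁ - t₂ := by ring
        rwa [he] at this
      refine le_trans h1 (hΘ.mono j j' p₁ p₂ q₁ q₂ (Nat.le_succ j) hp₁qℚ hq hp₂qℚ _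
        (abs_nonneg _))
  set zn : ℝ → EuclideanSpace ℝ (Fin N) := fun s => yh (s - tn) with hzn
  set z0 : ℝ → EuclideanSpace ℝ (Fin N) := fun s => yh (s - t₀) with hz0
  have hznK := hzK tn
  have hz0K := hzK t₀
  -- existence of the full-interval integrals
  obtain ⟨mn', ln, hmn', hln⟩ := (hν n).2 j' hj'1
  have hlnfin : ln (Icc (p₁ : ℝ) (p₂ : ℝ)) ≠ ⊤ := by
    have := hln.1.1
    exact (isCompact_Icc.measure_lt_top).ne
  have hEX : ∀ (νx : EuclideanSpace ℝ (Fin N) → Set ℝ → ℝ)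
      (hbx : ∀ v, IsBMeasure (νx v)) (lx : Measure ℝ)
      (hlx : HasLBound (ω j') νx j' lx) (hlxfin : lx (Icc (p₁ : ℝ) (p₂ : ℝ)) ≠ ⊤) (c : ℝ),
      ∃ Lx, IsCurveIntegral νx (fun s => yh (s - c)) (p₁ : ℝ) (p₂ : ℝ) Lx := by
    intro νx hbx lx hlx hlxfin c
    obtain ⟨hzc, hzb, hzm⟩ := hzK c
    exact exists_isCurveIntegral hbx hp₁p₂ lx hlx.1.2 hlxfin
      (hω.monotoneOn j') (hω.nonneg j') (hω.continuousOn j' 0 (mem_Ici.2 le_rfl))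
      (hω.map_zero j')
      (hΘ.monotoneOn j' p₁ p₂ hp₁p₂ℚ) (fun x hx => hΘ.nonneg j' p₁ p₂ x hp₁p₂ℚ hx)
      (hΘ.continuousOn j' p₁ p₂ hp₁p₂ℚ 0 (mem_Ici.2 le_rfl)) (hΘ.map_zero j' p₁ p₂ hp₁p₂ℚ)
      (fun s hs s' hs' => hzm s hs s' hs')
      (fun s _ s' _ => hlx.2 _ _ (hyhbd _) (hyhbd _))
  obtain ⟨Lfn, hLfn⟩ := hEX (ν n) (hν n).1 ln hln hlnfin tn
  obtain ⟨L0n, hL0n⟩ := hEX ν₀ hν₀.1 l₀ hl₀ hl₀fin tn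
  obtain ⟨L00, hL00⟩ := hEX ν₀ hν₀.1 l₀ hl₀ hl₀fin t₀
  -- constant values at the ends
  set v₁ : EuclideanSpace ℝ (Fin N) := y (q₁ : ℝ) with hv₁
  set v₂ : EuclideanSpace ℝ (Fin N) := y (q₂ : ℝ) with hv₂
  have hv₁bd : ‖v₁‖ ≤ (j' : ℝ) := le_trans (hybd _ ⟨le_rfl, hq'⟩) hjj'
  have hv₂bd : ‖v₂‖ ≤ (j' : ℝ) := le_trans (hybd _ ⟨hq', le_rfl⟩) hjj'
  -- constancy of the shifted curves on the outer blocks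
  have hconst : ∀ c : ℝ, (∀ s ∈ Icc (p₁ : ℝ) ((q₁ : ℝ) + c), yh (s - c) = v₁) ∧
      (∀ s ∈ Icc ((q₂ : ℝ) + c) (p₂ : ℝ), yh (s - c) = v₂) := by
    intro c
    constructor
    · intro s hs
      rw [hyh]
      simp only []
      rw [hcl, clampF_of_le hq' _ (by linarith [hs.2])]
    · intro s hs
      rw [hyh]
      simp only []
      rw [hcl, clampF_of_ge hq' _ (by linarith [hs.1])]
  -- decomposition of the full integrals
  have hLmidn : IsCurveIntegral (ν n) zn ((q₁ : ℝ) + tn) ((q₂ : ℝ) + tn) L := by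
    have h1 := isCurveIntegral_unshift (ν := ν n) (y := y) (c := tn) HL
    refine isCurveIntegral_congr (fun s hs => ?_) h1
    rw [hzn]
    simp only []
    rw [hyh]
    simp only []
    rw [hcl, clampF_of_mem (s - tn) ⟨by linarith [hs.1], by linarith [hs.2]⟩]
  have hLmid0 : IsCurveIntegral ν₀ z0 ((q₁ : ℝ) + t₀) ((q₂ : ℝ) + t₀) L₀ := by
    have h1 := isCurveIntegral_unshift (ν := ν₀) (y := y) (c := t₀) HL₀
    refine isCurveIntegral_congr (fun s hs => ?_) h1
    rw [hz0]
    simp only []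
    rw [hyh]
    simp only []
    rw [hcl, clampF_of_mem (s - t₀) ⟨by linarith [hs.1], by linarith [hs.2]⟩]
  have Eq1 : Lfn = ν n v₁ (Icc (p₁ : ℝ) ((q₁ : ℝ) + tn)) + L
      + ν n v₂ (Icc ((q₂ : ℝ) + tn) (p₂ : ℝ)) :=
    isCurveIntegral_three_split (hν n).1 A1 (by linarith) A2
      (hconst tn).1 (hconst tn).2 hLfn hLmidn
  have Eq2 : L00 = ν₀ v₁ (Icc (p₁ : ℝ) ((q₁ : ℝ) + t₀)) + L₀
      + ν₀ v₂ (Icc ((q₂ : ℝ) + t₀) (p₂ : ℝ)) :=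
    isCurveIntegral_three_split hν₀.1 A11 (by linarith) A12
      (hconst t₀).1 (hconst t₀).2 hL00 hLmid0
  -- main estimate E1
  have E1 : |Lfn - L0n| < ε₁ := hn₁ n hnn₁ zn hznK Lfn L0n hLfn hL0n
  -- estimate E2 : shift of the base point in ν₀
  have E2 : |L0n - L00| < ε₁ := by
    have hC : (0:ℝ) ≤ ω j' (Θ j q₁ q₂ |tn - t₀|) :=
      hω.nonneg j' _ (hΘ.nonneg j q₁ q₂ _ hq (abs_nonneg _))
    have hB : |L0n - L00| ≤ ω j' (Θ j q₁ q₂ |tn - t₀|)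
        * (l₀ (Icc (p₁ : ℝ) (p₂ : ℝ))).toReal := by
      refine isCurveIntegral_dist_le hp₁p₂ hL0n hL00 (fun P => ?_)
      refine riemannSum_sub_le P hC l₀ hl₀.1.2 hl₀fin (fun i hi => ?_)
      have hdn : ‖zn (P.tag i) - z0 (P.tag i)‖ ≤ Θ j q₁ q₂ |tn - t₀| := by
        have h1 := hyhmod (P.tag i - tn) (P.tag i - t₀)
        have he : P.tag i - tn - (P.tag i - t₀) = -(tn - t₀) := by ring
        rw [he, abs_neg] at h1
        exact h1
      have h2 := (hl₀.2 (zn (P.tag i)) (z0 (P.tag i)) (hyhbd _) (hyhbd _)).abs_le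
        (A := Icc (P.t i) (P.t (i+1))) (Metric.isBounded_Icc _ _) measurableSet_Icc
      refine le_trans h2 (mul_le_mul_of_nonneg_right ?_ ENNReal.toReal_nonneg)
      exact hω.monotoneOn j' (mem_Ici.2 (norm_nonneg _))
        (mem_Ici.2 (hΘ.nonneg j q₁ q₂ _ hq (abs_nonneg _))) hdn
    exact lt_of_le_of_lt hB (hρ₂ |tn - t₀| (abs_nonneg _) (le_trans htn.le hρ1))
  -- constant curves in the K-sets of the end intervals
  have hconstK : ∀ (v : EuclideanSpace ℝ (Fin N)), ‖v‖ ≤ (j' : ℝ) → ∀ (s₁ s₂ : ℚ), s₁ < s₂ →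
      (fun _ : ℝ => v) ∈ KSet (EuclideanSpace ℝ (Fin N)) Θ j' s₁ s₂ := by
    intro v hv s₁ s₂ hs
    refine ⟨continuousOn_const, fun t _ => hv, fun t₁ _ t₂ _ => ?_⟩
    rw [sub_self, norm_zero]
    exact hΘ.nonneg j' s₁ s₂ _ hs (abs_nonneg _)
  -- boundary estimates
  have hmBn := (hmB n j' hj'1).2
  have hmB0' := (hmB0 j' hj'1).2
  have T2 : |ν n v₁ (Icc (r₁ : ℝ) ((q₁ : ℝ) + tn))| < ε₁ := by
    refine lt_of_le_of_lt ((hmBn v₁ hv₁bd).abs_le (Metric.isBounded_Icc _ _)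
      measurableSet_Icc) ?_
    exact toReal_lt_of_meas_lt ((hmsmall (r₁ : ℝ) ((q₁ : ℝ) + tn) (by linarith) A4).1 n)
  have T3 : |ν₀ v₁ (Icc (r₁ : ℝ) ((q₁ : ℝ) + t₀))| < ε₁ := by
    refine lt_of_le_of_lt ((hmB0' v₁ hv₁bd).abs_le (Metric.isBounded_Icc _ _)
      measurableSet_Icc) ?_
    exact toReal_lt_of_meas_lt ((hmsmall (r₁ : ℝ) ((q₁ : ℝ) + t₀) (by linarith) A8).2)
  have T2' : |ν n v₂ (Icc ((q₂ : ℝ) + tn) (r₂ : ℝ))| < ε₁ := by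
    refine lt_of_le_of_lt ((hmBn v₂ hv₂bd).abs_le (Metric.isBounded_Icc _ _)
      measurableSet_Icc) ?_
    exact toReal_lt_of_meas_lt ((hmsmall ((q₂ : ℝ) + tn) (r₂ : ℝ) (by linarith) A6).1 n)
  have T3' : |ν₀ v₂ (Icc ((q₂ : ℝ) + t₀) (r₂ : ℝ))| < ε₁ := by
    refine lt_of_le_of_lt ((hmB0' v₂ hv₂bd).abs_le (Metric.isBounded_Icc _ _)
      measurableSet_Icc) ?_
    exact toReal_lt_of_meas_lt ((hmsmall ((q₂ : ℝ) + t₀) (r₂ : ℝ) (by linarith) A10).2)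
  have T1 : |ν n v₁ (Icc (p₁ : ℝ) (r₁ : ℝ)) - ν₀ v₁ (Icc (p₁ : ℝ) (r₁ : ℝ))| < ε₁ := by
    refine hn₂ n hnn₂ (fun _ => v₁) (hconstK v₁ hv₁bd p₁ r₁ hp₁r₁ℚ) _ _
      (isCurveIntegral_const (hν n).1 (fun _ _ => rfl))
      (isCurveIntegral_const hν₀.1 (fun _ _ => rfl))
  have T1' : |ν n v₂ (Icc (r₂ : ℝ) (p₂ : ℝ)) - ν₀ v₂ (Icc (r₂ : ℝ) (p₂ : ℝ))| < ε₁ := by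
    refine hn₃ n hnn₃ (fun _ => v₂) (hconstK v₂ hv₂bd r₂ p₂ hr₂p₂ℚ) _ _
      (isCurveIntegral_const (hν n).1 (fun _ _ => rfl))
      (isCurveIntegral_const hν₀.1 (fun _ _ => rfl))
  -- splittings of the boundary terms
  have S1 : ν n v₁ (Icc (p₁ : ℝ) ((q₁ : ℝ) + tn))
      = ν n v₁ (Icc (p₁ : ℝ) (r₁ : ℝ)) + ν n v₁ (Icc (r₁ : ℝ) ((q₁ : ℝ) + tn)) :=
    ((hν n).1 v₁).icc_split hp₁r₁.le A3
  have S2 : ν₀ v₁ (Icc (p₁ : ℝ) ((q₁ : ℝ) + t₀))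
      = ν₀ v₁ (Icc (p₁ : ℝ) (r₁ : ℝ)) + ν₀ v₁ (Icc (r₁ : ℝ) ((q₁ : ℝ) + t₀)) :=
    (hν₀.1 v₁).icc_split hp₁r₁.le A7
  have S3 : ν n v₂ (Icc ((q₂ : ℝ) + tn) (p₂ : ℝ))
      = ν n v₂ (Icc ((q₂ : ℝ) + tn) (r₂ : ℝ)) + ν n v₂ (Icc (r₂ : ℝ) (p₂ : ℝ)) :=
    ((hν n).1 v₂).icc_split A5 hr₂p₂.le
  have S4 : ν₀ v₂ (Icc ((q₂ : ℝ) + t₀) (p₂ : ℝ))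
      = ν₀ v₂ (Icc ((q₂ : ℝ) + t₀) (r₂ : ℝ)) + ν₀ v₂ (Icc (r₂ : ℝ) (p₂ : ℝ)) :=
    (hν₀.1 v₂).icc_split A9 hr₂p₂.le
  -- final assembly
  have hE1 := abs_lt.1 E1
  have hE2 := abs_lt.1 E2
  have hT1 := abs_lt.1 T1
  have hT1' := abs_lt.1 T1'
  have hT2 := abs_lt.1 T2
  have hT2' := abs_lt.1 T2'
  have hT3 := abs_lt.1 T3
  have hT3' := abs_lt.1 T3'
  rw [abs_lt]
  constructor <;> [skip; skip] <;>
  · rw [hε₁def] at hE1 hE2 hT1 hT1' hT2 hT2' hT3 hT3'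
    linarith [hE1.1, hE1.2, hE2.1, hE2.2, hT1.1, hT1.2, hT1'.1, hT1'.2, hT2.1, hT2.2,
      hT2'.1, hT2'.2, hT3.1, hT3.2, hT3'.1, hT3'.2]
end Part3
end

section
/- Let g : ℝ^N × ℝ → ℝ^N be such that g(·, t) is measurable in t for each fixed y, g(y, ·) is continuous in y for almost every t, and for every compact set K ⊂ ℝ^N there exist nonnegative locally Lebesgue-integrable functions m̃_K and l̃_K on ℝ with |g(y,t)| ≤ m̃_K(t) for a.e. t and all y ∈ K, and |g(y₁,t) − g(y₂,t)| ≤ l̃_K(t)·|y₁ − y₂| for a.e. t and all y₁, y₂ ∈ K. Let y : [a,b] → ℝ^N be continuous. Then for every ε > 0 there exists δ > 0 such that for every tagged δ-partition {(τ_i, [t_i, t_{i+1}]) : i = 1,…,k−1} of [a,b], one has |∫_a^b g(y(s), s) ds − Σ_{i=1}^{k−1} ∫_{t_i}^{t_{i+1}} g(y(τ_i), s) ds| < ε, where all integrals are Lebesgue integrals. In particular, the Riemann-type sums Σ_i ∫_{t_i}^{t_{i+1}} g(y(τ_i), s) ds converge to ∫_a^b g(y(s), s) ds as the mesh of the tagged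 partition tends to 0. -/
open MeasureTheory Set Filter Topology

variable {E : Type*} [NormedAddCommGroup E]

theorem stmt18 {N : ℕ} (g : EuclideanSpace ℝ (Fin N) → ℝ → EuclideanSpace ℝ (Fin N))
    (hmeas : ∀ z, Measurable fun t => g z t)
    (hcont : ∀ᵐ t ∂(volume : Measure ℝ), Continuous fun z => g z t)
    (hm : ∀ K : Set (EuclideanSpace ℝ (Fin N)), IsCompact K →
      ∃ mK : ℝ → ℝ, (∀ t, 0 ≤ mK t) ∧ LocallyIntegrable mK ∧
        ∀ᵐ t ∂(volume : Measure ℝ), ∀ z ∈ K, ‖g z t‖ ≤ mK t)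
    (hl : ∀ K : Set (EuclideanSpace ℝ (Fin N)), IsCompact K →
      ∃ lK : ℝ → ℝ, (∀ t, 0 ≤ lK t) ∧ LocallyIntegrable lK ∧
        ∀ᵐ t ∂(volume : Measure ℝ), ∀ z₁ ∈ K, ∀ z₂ ∈ K,
          ‖g z₁ t - g z₂ t‖ ≤ lK t * ‖z₁ - z₂‖)
    (a b : ℝ) (hab : a ≤ b) (y : ℝ → EuclideanSpace ℝ (Fin N))
    (hy : ContinuousOn y (Set.Icc a b)) :
    ∀ ε > 0, ∃ δ > 0, ∀ P : TaggedPartition a b, P.MeshLT δ →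
      ‖(∫ s in Set.Icc a b, g (y s) s) -
        ∑ i ∈ Finset.range P.k, ∫ s in Set.Icc (P.t i) (P.t (i + 1)), g (y (P.tag i)) s‖
        < ε := by
  intro ε hε
  have hKc : IsCompact (y '' Icc a b) := isCompact_Icc.image_of_continuousOn hy
  set K := y '' Icc a b with hK
  obtain ⟨mK, hmK0, hmKloc, hmKbd⟩ := hm K hKc
  obtain ⟨lK, hlK0, hlKloc, hlKbd⟩ := hl K hKc
  -- measurability of s ↦ g (y s) s on Icc a b
  set Y : ℝ → EuclideanSpace ℝ (Fin N) := fun s => y (Set.projIcc a b hab s) with hYdef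
  have hYcont : Continuous Y :=
    hy.comp_continuous (continuous_subtype_val.comp continuous_projIcc)
      fun x => (Set.projIcc a b hab x).2
  have hYeq : ∀ s ∈ Icc a b, Y s = y s := fun s hs => by
    rw [hYdef]; simp [Set.projIcc_of_mem hab hs]
  have hYsm := hYcont.stronglyMeasurable
  have hFn : ∀ n, Measurable fun s => g (hYsm.approx n s) s := fun n =>
    (hYsm.approx n).measurable_bind (fun z s => g z s) fun z => hmeas z
  have hGY : AEStronglyMeasurable (fun s => g (Y s) s) (volume : Measure ℝ) := by
    apply aestronglyMeasurable_of_tendsto_ae atTop (fun n => (hFn n).aestronglyMeasurable)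
    filter_upwards [hcont] with s hs
    exact (hs.tendsto (Y s)).comp (hYsm.tendsto_approx s)
  have hGmeas : AEStronglyMeasurable (fun s => g (y s) s) (volume.restrict (Icc a b)) := by
    refine hGY.restrict.congr ?_
    filter_upwards [ae_restrict_mem measurableSet_Icc] with s hs
    rw [hYeq s hs]
  have hymem : ∀ s ∈ Icc a b, y s ∈ K := fun s hs => mem_image_of_mem y hs
  have hmKint : IntegrableOn mK (Icc a b) := hmKloc.integrableOn_isCompact isCompact_Icc
  have hGint : IntegrableOn (fun s => g (y s) s) (Icc a b) := by
    refine Integrable.mono' hmKint hGmeas ?_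
    filter_upwards [ae_restrict_mem measurableSet_Icc, ae_restrict_of_ae hmKbd] with s hs h2
    exact h2 (y s) (hymem s hs)
  have hzint : ∀ z ∈ K, IntegrableOn (fun s => g z s) (Icc a b) := fun z hz => by
    refine Integrable.mono' hmKint (hmeas z).aestronglyMeasurable ?_
    filter_upwards [ae_restrict_of_ae hmKbd] with s h2
    exact h2 z hz
  have hlKint : IntegrableOn lK (Icc a b) := hlKloc.integrableOn_isCompact isCompact_Icc
  set Clk : ℝ := ∫ s in a..b, lK s with hClk
  have hClk0 : 0 ≤ Clk := intervalIntegral.integral_nonneg hab fun s _ => hlK0 s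
  set η : ℝ := ε / (Clk + 1) with hηdef
  have hη : 0 < η := div_pos hε (by linarith)
  have hunif : UniformContinuousOn y (Icc a b) :=
    isCompact_Icc.uniformContinuousOn_of_continuous hy
  obtain ⟨δ, hδ, hδy⟩ := Metric.uniformContinuousOn_iff.mp hunif η hη
  refine ⟨δ, hδ, fun P hP => ?_⟩
  -- monotonicity of partition points
  have htmono : ∀ j, j ≤ P.k → ∀ i, i ≤ j → P.t i ≤ P.t j := by
    intro j hj
    induction j with
    | zero => intro i hi; have : i = 0 := Nat.le_zero.mp hi; subst this; exact le_rfl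
    | succ n ih =>
      intro i hi
      rcases Nat.lt_or_ge i (n + 1) with h | h
      · exact le_trans (ih (by omega) i (by omega)) (P.lt n (by omega)).le
      · have : i = n + 1 := le_antisymm hi h
        subst this; exact le_rfl
  have htmem : ∀ i, i ≤ P.k → P.t i ∈ Icc a b := by
    intro i hi
    constructor
    · have h0 := htmono i hi 0 (Nat.zero_le i); rwa [P.left] at h0
    · have h0 := htmono P.k le_rfl i hi; rwa [P.right] at h0
  have hsub : ∀ i < P.k, Icc (P.t i) (P.t (i + 1)) ⊆ Icc a b := fun i hi =>
    Icc_subset_Icc (htmem i hi.le).1 (htmem (i + 1) hi).2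
  have hfint : ∀ i < P.k, IntervalIntegrable (fun s => g (y s) s) volume (P.t i) (P.t (i + 1)) :=
    fun i hi => by
      refine IntegrableOn.intervalIntegrable ?_
      rw [uIcc_of_le (P.lt i hi).le]
      exact hGint.mono_set (hsub i hi)
  have htagmem : ∀ i < P.k, P.tag i ∈ Icc a b := fun i hi => hsub i hi (P.tag_mem i hi)
  have hτint : ∀ i < P.k,
      IntervalIntegrable (fun s => g (y (P.tag i)) s) volume (P.t i) (P.t (i + 1)) :=
    fun i hi => by
      refine IntegrableOn.intervalIntegrable ?_
      rw [uIcc_of_le (P.lt i hi).le]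
      exact (hzint _ (hymem _ (htagmem i hi))).mono_set (hsub i hi)
  have hlKpint : ∀ i < P.k, IntervalIntegrable lK volume (P.t i) (P.t (i + 1)) := fun i hi => by
    refine IntegrableOn.intervalIntegrable ?_
    rw [uIcc_of_le (P.lt i hi).le]
    exact hlKint.mono_set (hsub i hi)
  have hsplit : (∫ s in Icc a b, g (y s) s) =
      ∑ i ∈ Finset.range P.k, ∫ s in (P.t i)..(P.t (i + 1)), g (y s) s := by
    rw [intervalIntegral.sum_integral_adjacent_intervals hfint, P.left, P.right,
      intervalIntegral.integral_of_le hab, integral_Icc_eq_integral_Ioc]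
  have hlksplit : (∑ i ∈ Finset.range P.k, ∫ s in (P.t i)..(P.t (i + 1)), lK s) = Clk := by
    rw [intervalIntegral.sum_integral_adjacent_intervals hlKpint, P.left, P.right]
  have htag : ∀ i ∈ Finset.range P.k, (∫ s in Icc (P.t i) (P.t (i + 1)), g (y (P.tag i)) s) =
      ∫ s in (P.t i)..(P.t (i + 1)), g (y (P.tag i)) s := fun i hi => by
    rw [intervalIntegral.integral_of_le (P.lt i (Finset.mem_range.mp hi)).le,
      integral_Icc_eq_integral_Ioc]
  have key : ∀ i < P.k, ‖(∫ s in (P.t i)..(P.t (i + 1)), g (y s) s) -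
      ∫ s in (P.t i)..(P.t (i + 1)), g (y (P.tag i)) s‖ ≤
      (∫ s in (P.t i)..(P.t (i + 1)), lK s) * η := by
    intro i hi
    rw [← intervalIntegral.integral_sub (hfint i hi) (hτint i hi)]
    have hae : ∀ᵐ s ∂(volume.restrict (Set.uIoc (P.t i) (P.t (i + 1)))),
        ‖g (y s) s - g (y (P.tag i)) s‖ ≤ lK s * η := by
      filter_upwards [ae_restrict_mem measurableSet_uIoc, ae_restrict_of_ae hlKbd] with s hs hbnd
      rw [uIoc_of_le (P.lt i hi).le] at hs
      have hsIcc : s ∈ Icc (P.t i) (P.t (i + 1)) := Ioc_subset_Icc_self hs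
      have hsab : s ∈ Icc a b := hsub i hi hsIcc
      have hτIcc := P.tag_mem i hi
      have hdist : dist s (P.tag i) < δ := by
        rw [Real.dist_eq]
        have h1 := hP i hi
        have := hsIcc.1; have := hsIcc.2; have := hτIcc.1; have := hτIcc.2
        rw [abs_lt]; constructor <;> linarith
      have hyd : ‖y s - y (P.tag i)‖ ≤ η := by
        rw [← dist_eq_norm]
        exact (hδy s hsab (P.tag i) (htagmem i hi) hdist).le
      calc ‖g (y s) s - g (y (P.tag i)) s‖ ≤ lK s * ‖y s - y (P.tag i)‖ :=
            hbnd (y s) (hymem s hsab) (y (P.tag i)) (hymem _ (htagmem i hi))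
        _ ≤ lK s * η := mul_le_mul_of_nonneg_left hyd (hlK0 s)
    have hbint : IntervalIntegrable (fun s => lK s * η) volume (P.t i) (P.t (i + 1)) :=
      (hlKpint i hi).mul_const η
    refine (intervalIntegral.norm_integral_le_abs_of_norm_le hae hbint).trans_eq ?_
    rw [intervalIntegral.integral_mul_const]
    rw [abs_of_nonneg (mul_nonneg
      (intervalIntegral.integral_nonneg (P.lt i hi).le fun s _ => hlK0 s) hη.le)]
  calc ‖(∫ s in Icc a b, g (y s) s) -
        ∑ i ∈ Finset.range P.k, ∫ s in Icc (P.t i) (P.t (i + 1)), g (y (P.tag i)) s‖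
      = ‖∑ i ∈ Finset.range P.k, ((∫ s in (P.t i)..(P.t (i + 1)), g (y s) s) -
          ∫ s in (P.t i)..(P.t (i + 1)), g (y (P.tag i)) s)‖ := by
        rw [hsplit, Finset.sum_congr rfl htag, ← Finset.sum_sub_distrib]
    _ ≤ ∑ i ∈ Finset.range P.k, ‖(∫ s in (P.t i)..(P.t (i + 1)), g (y s) s) -
          ∫ s in (P.t i)..(P.t (i + 1)), g (y (P.tag i)) s‖ := norm_sum_le _ _
    _ ≤ ∑ i ∈ Finset.range P.k, (∫ s in (P.t i)..(P.t (i + 1)), lK s) * η :=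
        Finset.sum_le_sum fun i hi => key i (Finset.mem_range.mp hi)
    _ = Clk * η := by rw [← Finset.sum_mul, hlksplit]
    _ < ε := by
        have h1 : η * (Clk + 1) = ε := div_mul_cancel₀ ε (by linarith : Clk + 1 ≠ 0)
        nlinarith
end

section
/- Let g₁, g₂ : ℝ^m × ℝ → ℝ^m be measurable in τ for each fixed y and continuous in y for a.e. τ, with nonnegative locally Lebesgue-integrable m-bounds on compact sets (for every compact K ⊂ ℝ^m there is locally integrable m̃_K with |g_i(y,τ)| ≤ m̃_K(τ) for a.e. τ and all y ∈ K, i = 1,2). Fix j ≥ 1 and suppose g₁ has an l-bound l̃_j ∈ L¹_loc on the closed ball B_j ⊂ ℝ^m: |g₁(y₁,τ) − g₁(y₂,τ)| ≤ l̃_j(τ)·|y₁ − y₂| for a.e. τ and all |y₁|, |y₂| ≤ j. Let y₁, y₂ : [a,b] → ℝ^m be continuous with y₁(t) = y₁(a) + ∫_a^t g₁(y₁(s), s) ds and y₂(t) = y₂(a) + ∫_a^t g₂(y₂(s), s) ds for all t ∈ [a,b], with y₁(a) = y₂(a) and y₁([a,b]), y₂([a,b]) ⊆ B_j. Suppose for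 some σ > 0 that |g₁(y₂(τ), τ) − g₂(y₂(τ), τ)| ≤ l̃_j(τ)·σ for a.e. τ ∈ [a,b]. Then, for any constant c_j > 0 such that ∫_s^{s+(b−a)} l̃_j(τ) dτ ≤ c_j for all s ∈ ℝ, one has |y₁(τ) − y₂(τ)| ≤ c_j · e^{c_j} · σ for every τ ∈ [a,b]. -/
open MeasureTheory Set Filter Topology

variable {E : Type*} [NormedAddCommGroup E]

lemma comp_aesm {m : ℕ} (g : EuclideanSpace ℝ (Fin m) → ℝ → EuclideanSpace ℝ (Fin m))
    (hg : ∀ z, Measurable fun τ => g z τ)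
    (hc : ∀ᵐ τ ∂(volume : Measure ℝ), Continuous fun z => g z τ)
    (Y : ℝ → EuclideanSpace ℝ (Fin m)) (hY : Continuous Y) :
    AEStronglyMeasurable (fun s => g (Y s) s) (volume : Measure ℝ) := by
  have hfm : ∀ n : ℕ, AEStronglyMeasurable
      (fun s => g (Y (((⌊s * ((n:ℝ)+1)⌋ : ℤ) : ℝ) / ((n:ℝ)+1))) s) (volume : Measure ℝ) := by
    intro n
    have h1 : Measurable fun p : ℝ × ℤ => g (Y ((p.2 : ℝ) / ((n:ℝ)+1))) p.1 :=
      measurable_from_prod_countable_left fun k => by simpa using hg (Y ((k:ℝ)/((n:ℝ)+1)))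
    have h2 : Measurable fun s : ℝ => (s, (⌊s * ((n:ℝ)+1)⌋ : ℤ)) :=
      measurable_id.prodMk (Int.measurable_floor.comp (measurable_id.mul_const _))
    exact (h1.comp h2).aestronglyMeasurable
  apply aestronglyMeasurable_of_tendsto_ae atTop hfm
  filter_upwards [hc] with s hs
  have ht : Tendsto (fun n : ℕ => ((⌊s * ((n:ℝ)+1)⌋ : ℤ) : ℝ) / ((n:ℝ)+1)) atTop (𝓝 s) := by
    have hpos : ∀ n : ℕ, (0:ℝ) < (n:ℝ)+1 := fun n => by positivity
    have hlo : Tendsto (fun n : ℕ => s - 1/((n:ℝ)+1)) atTop (𝓝 s) := by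
      have := tendsto_one_div_add_atTop_nhds_zero_nat (𝕜 := ℝ)
      simpa using tendsto_const_nhds.sub this
    refine tendsto_of_tendsto_of_tendsto_of_le_of_le hlo tendsto_const_nhds ?_ ?_
    · intro n
      rw [sub_le_iff_le_add, ← add_div, le_div_iff₀ (hpos n)]
      have := Int.sub_one_lt_floor (s * ((n:ℝ)+1))
      nlinarith [this]
    · intro n
      rw [div_le_iff₀ (hpos n)]
      exact Int.floor_le _
  exact ((hs.tendsto (Y s)).comp ((hY.tendsto s).comp ht))

set_option maxHeartbeats 1000000 in
theorem stmt19 {m : ℕ} (g₁ g₂ : EuclideanSpace ℝ (Fin m) → ℝ → EuclideanSpace ℝ (Fin m))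
    (hmeas₁ : ∀ z, Measurable fun τ => g₁ z τ)
    (hmeas₂ : ∀ z, Measurable fun τ => g₂ z τ)
    (hcont₁ : ∀ᵐ τ ∂(volume : Measure ℝ), Continuous fun z => g₁ z τ)
    (hcont₂ : ∀ᵐ τ ∂(volume : Measure ℝ), Continuous fun z => g₂ z τ)
    (hm : ∀ K : Set (EuclideanSpace ℝ (Fin m)), IsCompact K →
      ∃ mK : ℝ → ℝ, (∀ τ, 0 ≤ mK τ) ∧ LocallyIntegrable mK ∧
        ∀ᵐ τ ∂(volume : Measure ℝ), ∀ z ∈ K, ‖g₁ z τ‖ ≤ mK τ ∧ ‖g₂ z τ‖ ≤ mK τ)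
    (j : ℕ) (hj : 1 ≤ j) (lj : ℝ → ℝ) (hlj0 : ∀ τ, 0 ≤ lj τ)
    (hljloc : LocallyIntegrable lj)
    (hlip : ∀ᵐ τ ∂(volume : Measure ℝ), ∀ z₁ z₂ : EuclideanSpace ℝ (Fin m),
      ‖z₁‖ ≤ (j : ℝ) → ‖z₂‖ ≤ (j : ℝ) → ‖g₁ z₁ τ - g₁ z₂ τ‖ ≤ lj τ * ‖z₁ - z₂‖)
    (a b : ℝ) (hab : a ≤ b)
    (y₁ y₂ : ℝ → EuclideanSpace ℝ (Fin m))
    (hy₁c : ContinuousOn y₁ (Set.Icc a b)) (hy₂c : ContinuousOn y₂ (Set.Icc a b))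
    (heq₁ : ∀ t ∈ Set.Icc a b, y₁ t = y₁ a + ∫ s in Set.Icc a t, g₁ (y₁ s) s)
    (heq₂ : ∀ t ∈ Set.Icc a b, y₂ t = y₂ a + ∫ s in Set.Icc a t, g₂ (y₂ s) s)
    (hinit : y₁ a = y₂ a)
    (hb₁ : ∀ t ∈ Set.Icc a b, ‖y₁ t‖ ≤ (j : ℝ)) (hb₂ : ∀ t ∈ Set.Icc a b, ‖y₂ t‖ ≤ (j : ℝ))
    (σ : ℝ) (hσ : 0 < σ)
    (hclose : ∀ᵐ τ ∂(volume : Measure ℝ), τ ∈ Set.Icc a b →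
      ‖g₁ (y₂ τ) τ - g₂ (y₂ τ) τ‖ ≤ lj τ * σ)
    (cj : ℝ) (hcj : 0 < cj)
    (hcjint : ∀ s : ℝ, ∫ τ in Set.Icc s (s + (b - a)), lj τ ≤ cj) :
    ∀ τ ∈ Set.Icc a b, ‖y₁ τ - y₂ τ‖ ≤ cj * Real.exp cj * σ := by
  -- clamp function
  set c : ℝ → ℝ := fun s => max a (min s b) with hcdef
  have hccont : Continuous c := continuous_const.max (continuous_id.min continuous_const)
  have hcmem : ∀ s, c s ∈ Icc a b := fun s =>
    ⟨le_max_left _ _, max_le hab (min_le_right _ _)⟩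
  have hceq : ∀ s ∈ Icc a b, c s = s := fun s hs => by
    simp only [hcdef]; rw [min_eq_left hs.2, max_eq_right hs.1]
  set Y₁ : ℝ → EuclideanSpace ℝ (Fin m) := fun s => y₁ (c s) with hY₁def
  set Y₂ : ℝ → EuclideanSpace ℝ (Fin m) := fun s => y₂ (c s) with hY₂def
  have hY₁cont : Continuous Y₁ := hy₁c.comp_continuous hccont hcmem
  have hY₂cont : Continuous Y₂ := hy₂c.comp_continuous hccont hcmem
  have hY₁eq : ∀ s ∈ Icc a b, Y₁ s = y₁ s := fun s hs => by rw [hY₁def]; simp [hceq s hs]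
  have hY₂eq : ∀ s ∈ Icc a b, Y₂ s = y₂ s := fun s hs => by rw [hY₂def]; simp [hceq s hs]
  have hnY₁ : ∀ s, ‖Y₁ s‖ ≤ (j : ℝ) := fun s => hb₁ _ (hcmem s)
  have hnY₂ : ∀ s, ‖Y₂ s‖ ≤ (j : ℝ) := fun s => hb₂ _ (hcmem s)
  set u : ℝ → ℝ := fun s => ‖Y₁ s - Y₂ s‖ with hudef
  have hucont : Continuous u := (hY₁cont.sub hY₂cont).norm
  have hu0 : ∀ s, 0 ≤ u s := fun s => norm_nonneg _
  have hubdd : ∀ s, u s ≤ 2 * (j : ℝ) := fun s => by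
    have := norm_sub_le (Y₁ s) (Y₂ s)
    have h1 := hnY₁ s; have h2 := hnY₂ s
    simp only [hudef]; linarith
  set w : ℝ → ℝ := fun s => (u s + σ) * lj s with hwdef
  have hw0 : ∀ s, 0 ≤ w s := fun s => mul_nonneg (by linarith [hu0 s]) (hlj0 s)
  have hljInt : IntegrableOn lj (Icc a b) := hljloc.integrableOn_isCompact isCompact_Icc
  have hwInt : IntegrableOn w (Icc a b) := by
    refine Integrable.bdd_mul (c := 2 * (j:ℝ) + σ) hljInt
      ((hucont.add continuous_const).aestronglyMeasurable.restrict) (Eventually.of_forall fun s => ?_)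
    rw [Real.norm_eq_abs, abs_of_nonneg (by linarith [hu0 s])]
    linarith [hubdd s]
  -- integrable integrands
  obtain ⟨mK, hmK0, hmKloc, hmKbd⟩ :=
    hm (Metric.closedBall 0 (j : ℝ)) (isCompact_closedBall _ _)
  have hmKInt : IntegrableOn mK (Icc a b) := hmKloc.integrableOn_isCompact isCompact_Icc
  have hH₁Int : IntegrableOn (fun s => g₁ (Y₁ s) s) (Icc a b) := by
    refine Integrable.mono' hmKInt ((comp_aesm g₁ hmeas₁ hcont₁ Y₁ hY₁cont).restrict) ?_
    refine ae_restrict_of_ae ?_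
    filter_upwards [hmKbd] with s hsK
    exact (hsK _ (mem_closedBall_zero_iff.2 (hnY₁ s))).1
  have hH₂Int : IntegrableOn (fun s => g₂ (Y₂ s) s) (Icc a b) := by
    refine Integrable.mono' hmKInt ((comp_aesm g₂ hmeas₂ hcont₂ Y₂ hY₂cont).restrict) ?_
    refine ae_restrict_of_ae ?_
    filter_upwards [hmKbd] with s hsK
    exact (hsK _ (mem_closedBall_zero_iff.2 (hnY₂ s))).2
  set V : ℝ → ℝ := fun t => ∫ s in Ioc a t, w s with hVdef
  have hV0 : ∀ t, 0 ≤ V t := fun t =>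
    setIntegral_nonneg measurableSet_Ioc fun s _ => hw0 s
  have hVadd : ∀ α β, a ≤ α → α ≤ β → β ≤ b →
      V β = V α + ∫ s in Ioc α β, w s := by
    intro α β h1 h2 h3
    simp only [hVdef]
    rw [← Ioc_union_Ioc_eq_Ioc h1 h2, setIntegral_union (Ioc_disjoint_Ioc_of_le le_rfl)
      measurableSet_Ioc (hwInt.mono_set (Ioc_subset_Icc_self.trans (Icc_subset_Icc_right (h2.trans h3))))
      (hwInt.mono_set (fun x hx => ⟨h1.trans hx.1.le, hx.2.trans h3⟩))]
  have hVmono : ∀ t ∈ Icc a b, V t ≤ V b := by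
    intro t ht
    refine setIntegral_mono_set (hwInt.mono_set Ioc_subset_Icc_self)
      (Eventually.of_forall fun s => hw0 s) (HasSubset.Subset.eventuallyLE ?_)
    exact Ioc_subset_Ioc_right ht.2
  -- key Gronwall-type integral inequality
  have hkey : ∀ t ∈ Icc a b, u t ≤ V t := by
    intro t ht
    have htIcc : Icc a t ⊆ Icc a b := Icc_subset_Icc_right ht.2
    have e1 : ∫ s in Icc a t, g₁ (y₁ s) s = ∫ s in Icc a t, g₁ (Y₁ s) s :=
      setIntegral_congr_fun measurableSet_Icc fun s hs => by rw [hY₁eq s (htIcc hs)]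
    have e2 : ∫ s in Icc a t, g₂ (y₂ s) s = ∫ s in Icc a t, g₂ (Y₂ s) s :=
      setIntegral_congr_fun measurableSet_Icc fun s hs => by rw [hY₂eq s (htIcc hs)]
    have hdiff : Y₁ t - Y₂ t =
        ∫ s in Icc a t, (g₁ (Y₁ s) s - g₂ (Y₂ s) s) := by
      rw [hY₁eq t ht, hY₂eq t ht, heq₁ t ht, heq₂ t ht, hinit, e1, e2,
        integral_sub (hH₁Int.mono_set htIcc) (hH₂Int.mono_set htIcc)]
      abel
    have hbnd : (fun s => ‖g₁ (Y₁ s) s - g₂ (Y₂ s) s‖) ≤ᵐ[volume.restrict (Icc a t)] w := by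
      have hmem := ae_restrict_mem (μ := volume) (measurableSet_Icc (a := a) (b := t))
      filter_upwards [ae_restrict_of_ae hlip, ae_restrict_of_ae hclose, hmem] with s h1 h2 hs
      have hsab : s ∈ Icc a b := htIcc hs
      have e3 : ‖g₁ (Y₁ s) s - g₂ (Y₂ s) s‖ ≤
          ‖g₁ (Y₁ s) s - g₁ (Y₂ s) s‖ + ‖g₁ (Y₂ s) s - g₂ (Y₂ s) s‖ :=
        norm_sub_le_norm_sub_add_norm_sub _ _ _
      have e4 : ‖g₁ (Y₁ s) s - g₁ (Y₂ s) s‖ ≤ lj s * u s := h1 _ _ (hnY₁ s) (hnY₂ s)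
      have e5 : ‖g₁ (Y₂ s) s - g₂ (Y₂ s) s‖ ≤ lj s * σ := by
        rw [hY₂eq s hsab]; exact h2 hsab
      simp only [hwdef]; nlinarith [hlj0 s]
    calc u t = ‖∫ s in Icc a t, (g₁ (Y₁ s) s - g₂ (Y₂ s) s)‖ := by
          show ‖Y₁ t - Y₂ t‖ = _; rw [hdiff]
      _ ≤ ∫ s in Icc a t, ‖g₁ (Y₁ s) s - g₂ (Y₂ s) s‖ := norm_integral_le_integral_norm _
      _ ≤ ∫ s in Icc a t, w s := by
          refine setIntegral_mono_ae_restrict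
            (((hH₁Int.mono_set htIcc).sub (hH₂Int.mono_set htIcc)).norm)
            (hwInt.mono_set htIcc) hbnd
      _ = V t := integral_Icc_eq_integral_Ioc
  -- piece estimate
  have hpiece : ∀ q : ℝ, 0 < q → q < 1 → ∀ α β, a ≤ α → α ≤ β → β ≤ b →
      (∫ s in Ioc α β, lj s) ≤ q →
      V β + σ ≤ (V α + σ) * Real.exp ((∫ s in Ioc α β, lj s) / (1 - q)) := by
    intro q hq0 hq1 α β hαa hαβ hβb hQq
    set Q : ℝ := ∫ s in Ioc α β, lj s with hQdef
    have h1q : (0:ℝ) < 1 - q := by linarith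
    have hQ0 : 0 ≤ Q := setIntegral_nonneg measurableSet_Ioc fun s _ => hlj0 s
    have hsub : Icc α β ⊆ Icc a b := Icc_subset_Icc hαa hβb
    obtain ⟨t', ht'mem, ht'max⟩ := isCompact_Icc.exists_isMaxOn (nonempty_Icc.2 hαβ)
      (hucont.continuousOn (s := Icc α β))
    set S : ℝ := u t' with hSdef
    have hS0 : 0 ≤ S := hu0 t'
    have hljIntαβ : IntegrableOn lj (Ioc α β) :=
      hljInt.mono_set (Ioc_subset_Icc_self.trans hsub)
    have hww : ∀ γ, γ ∈ Icc α β → (∫ s in Ioc α γ, w s) ≤ (S + σ) * Q := by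
      intro γ hγ
      have hsub2 : Ioc α γ ⊆ Icc α β := fun x hx => ⟨hx.1.le, hx.2.trans hγ.2⟩
      calc (∫ s in Ioc α γ, w s) ≤ ∫ s in Ioc α γ, (S + σ) * lj s := by
            refine setIntegral_mono_on
              (hwInt.mono_set (hsub2.trans hsub)) ((hljInt.mono_set (hsub2.trans hsub)).const_mul _)
              measurableSet_Ioc fun s hs => ?_
            have : u s ≤ S := ht'max (hsub2 hs)
            simp only [hwdef]
            nlinarith [hlj0 s]
        _ = (S + σ) * ∫ s in Ioc α γ, lj s := integral_const_mul _ _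
        _ ≤ (S + σ) * Q := by
            refine mul_le_mul_of_nonneg_left ?_ (by linarith)
            refine setIntegral_mono_set hljIntαβ (Eventually.of_forall fun s => hlj0 s)
              (HasSubset.Subset.eventuallyLE (Ioc_subset_Ioc_right hγ.2))
    have hSbound : S + σ ≤ (V α + σ) / (1 - q) := by
      have h1 : u t' ≤ V t' := hkey t' (hsub ht'mem)
      have h2 : V t' = V α + ∫ s in Ioc α t', w s :=
        hVadd α t' hαa ht'mem.1 (ht'mem.2.trans hβb)
      have h3 := hww t' ht'mem
      have h4 : S ≤ V α + (S + σ) * Q := by rw [hSdef]; linarith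
      rw [le_div_iff₀ h1q]
      nlinarith [hV0 α]
    have h5 : V β = V α + ∫ s in Ioc α β, w s := hVadd α β hαa hαβ hβb
    have h6 := hww β ⟨hαβ, le_rfl⟩
    have h7 : V β + σ ≤ (V α + σ) * (1 + Q / (1 - q)) := by
      have : (S + σ) * Q ≤ (V α + σ) / (1 - q) * Q :=
        mul_le_mul_of_nonneg_right hSbound hQ0
      have hexp : (V α + σ) / (1 - q) * Q = (V α + σ) * (Q / (1 - q)) := by ring
      nlinarith [hV0 α]
    refine h7.trans ?_
    refine mul_le_mul_of_nonneg_left ?_ (by linarith [hV0 α])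
    have := Real.add_one_le_exp (Q / (1 - q))
    linarith
  -- choice of q
  have hcjexp : Real.exp cj - 1 < cj * Real.exp cj := by
    have h := Real.add_one_lt_exp (x := -cj) (by linarith : (-cj) ≠ 0)
    have h2 : Real.exp (-cj) = (Real.exp cj)⁻¹ := Real.exp_neg cj
    have h3 : Real.exp cj * (Real.exp cj)⁻¹ = 1 :=
      mul_inv_cancel₀ (ne_of_gt (Real.exp_pos cj))
    nlinarith [Real.exp_pos cj]
  obtain ⟨q, hq0, hq1, hqle⟩ : ∃ q : ℝ, 0 < q ∧ q < 1 ∧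
      Real.exp (cj / (1 - q)) ≤ cj * Real.exp cj + 1 := by
    have hcont : ContinuousAt (fun x : ℝ => Real.exp (cj / (1 - x))) 0 := by
      refine Real.continuous_exp.continuousAt.comp ?_
      exact ContinuousAt.div continuousAt_const
        (continuous_const.sub continuous_id).continuousAt (by norm_num)
    have hval : (fun x : ℝ => Real.exp (cj / (1 - x))) 0 = Real.exp cj := by norm_num
    have hlt : (fun x : ℝ => Real.exp (cj / (1 - x))) 0 < cj * Real.exp cj + 1 := by
      rw [hval]; linarith
    have hev : ∀ᶠ x in 𝓝 (0:ℝ), Real.exp (cj / (1 - x)) < cj * Real.exp cj + 1 :=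
      hcont.eventually_lt_const hlt
    rw [Metric.eventually_nhds_iff] at hev
    obtain ⟨ε, hε0, hε⟩ := hev
    refine ⟨min (ε/2) (1/2), by positivity, ?_, ?_⟩
    · exact lt_of_le_of_lt (min_le_right _ _) (by norm_num)
    · refine le_of_lt (hε ?_)
      rw [Real.dist_eq, sub_zero, abs_of_pos (by positivity)]
      exact lt_of_le_of_lt (min_le_left _ _) (by linarith)
  have h1q : (0:ℝ) < 1 - q := by linarith
  -- partition
  have hΛcont : ContinuousOn (fun t => ∫ s in Ioc a t, lj s) (Icc a b) :=
    intervalIntegral.continuousOn_primitive hljInt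
  have hΛuc := isCompact_Icc.uniformContinuousOn_of_continuous (s := Icc a b) hΛcont
  rw [Metric.uniformContinuousOn_iff] at hΛuc
  obtain ⟨δ, hδ0, hδ⟩ := hΛuc q hq0
  obtain ⟨N, hN⟩ := exists_nat_gt (max 1 ((b - a) / δ))
  have hN1 : (1:ℝ) < N := lt_of_le_of_lt (le_max_left _ _) hN
  have hN0 : (0:ℝ) < N := by linarith
  have hNδ : (b - a) / (N:ℝ) < δ := by
    rw [div_lt_iff₀ hN0]
    have h := lt_of_le_of_lt (le_max_right 1 ((b - a) / δ)) hN
    rw [div_lt_iff₀ hδ0] at h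
    nlinarith
  set t : ℕ → ℝ := fun i => a + i * ((b - a) / N) with htdef
  have hstep0 : (0:ℝ) ≤ (b - a) / N := div_nonneg (by linarith) hN0.le
  have htmem : ∀ i : ℕ, i ≤ N → t i ∈ Icc a b := by
    intro i hi
    constructor
    · simp only [htdef]; nlinarith [Nat.cast_nonneg (α := ℝ) i]
    · simp only [htdef]
      have : (i:ℝ) ≤ N := by exact_mod_cast hi
      rw [← sub_nonneg]
      have : (i:ℝ) * ((b - a)/N) ≤ (N:ℝ) * ((b-a)/N) := by nlinarith
      have hNbb : (N:ℝ) * ((b-a)/N) = b - a := by field_simp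
      linarith
  have htsucc : ∀ i : ℕ, t i ≤ t (i+1) := by
    intro i; simp only [htdef, Nat.cast_add, Nat.cast_one]; nlinarith
  have hQi : ∀ i : ℕ, i + 1 ≤ N →
      (∫ s in Ioc (t i) (t (i+1)), lj s) ≤ q ∧
      (∫ s in Ioc a (t (i+1)), lj s) =
        (∫ s in Ioc a (t i), lj s) + ∫ s in Ioc (t i) (t (i+1)), lj s := by
    intro i hi
    have hmi := htmem i (by omega)
    have hmi1 := htmem (i+1) hi
    have hadd : (∫ s in Ioc a (t (i+1)), lj s) =
        (∫ s in Ioc a (t i), lj s) + ∫ s in Ioc (t i) (t (i+1)), lj s := by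
      rw [← Ioc_union_Ioc_eq_Ioc hmi.1 (htsucc i), setIntegral_union (Ioc_disjoint_Ioc_of_le le_rfl)
        measurableSet_Ioc
        (hljInt.mono_set (Ioc_subset_Icc_self.trans (Icc_subset_Icc_right hmi.2)))
        (hljInt.mono_set (fun x hx => ⟨hmi.1.trans hx.1.le, hx.2.trans hmi1.2⟩))]
    refine ⟨?_, hadd⟩
    have hdist : dist (t (i+1)) (t i) < δ := by
      rw [Real.dist_eq]
      have : t (i+1) - t i = (b - a)/N := by
        simp only [htdef, Nat.cast_add, Nat.cast_one]; ring
      rw [this, abs_of_nonneg hstep0]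
      exact hNδ
    have := hδ (t (i+1)) hmi1 (t i) hmi hdist
    rw [Real.dist_eq] at this
    have : |(∫ s in Ioc a (t (i+1)), lj s) - ∫ s in Ioc a (t i), lj s| < q := this
    rw [hadd] at this
    have := abs_lt.1 this
    linarith [this.2]
  -- induction
  have hind : ∀ i : ℕ, i ≤ N →
      V (t i) + σ ≤ σ * Real.exp ((∫ s in Ioc a (t i), lj s) / (1 - q)) := by
    intro i
    induction i with
    | zero =>
      intro _
      have ht0 : t 0 = a := by simp [htdef]
      rw [ht0]
      simp only [hVdef, Ioc_self, Measure.restrict_empty, integral_zero_measure]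
      simp
    | succ i ih =>
      intro hi
      have ihh := ih (by omega)
      obtain ⟨hQle, hQadd⟩ := hQi i hi
      have hmi := htmem i (by omega)
      have hmi1 := htmem (i+1) hi
      have hp := hpiece q hq0 hq1 (t i) (t (i+1)) hmi.1 (htsucc i) hmi1.2 hQle
      refine hp.trans ?_
      have hexp0 : (0:ℝ) < Real.exp ((∫ s in Ioc (t i) (t (i+1)), lj s) / (1 - q)) :=
        Real.exp_pos _
      calc (V (t i) + σ) * Real.exp ((∫ s in Ioc (t i) (t (i+1)), lj s) / (1 - q))
          ≤ (σ * Real.exp ((∫ s in Ioc a (t i), lj s) / (1 - q))) *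
            Real.exp ((∫ s in Ioc (t i) (t (i+1)), lj s) / (1 - q)) :=
            mul_le_mul_of_nonneg_right ihh hexp0.le
        _ = σ * Real.exp ((∫ s in Ioc a (t (i+1)), lj s) / (1 - q)) := by
            rw [mul_assoc, ← Real.exp_add, hQadd]; ring_nf
  -- conclusion
  intro τ hτ
  have htN : t N = b := by
    simp only [htdef]; field_simp; ring
  have hΛb : (∫ s in Ioc a b, lj s) ≤ cj := by
    have := hcjint a
    rw [show a + (b - a) = b by ring, integral_Icc_eq_integral_Ioc] at this
    exact this
  have hΛb0 : 0 ≤ ∫ s in Ioc a b, lj s :=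
    setIntegral_nonneg measurableSet_Ioc fun s _ => hlj0 s
  have hfin : V b + σ ≤ σ * Real.exp (cj / (1 - q)) := by
    have := hind N le_rfl
    rw [htN] at this
    refine this.trans ?_
    refine mul_le_mul_of_nonneg_left (Real.exp_le_exp.2 ?_) hσ.le
    gcongr
  have huτ : u τ ≤ V τ := hkey τ hτ
  have hVτ : V τ ≤ V b := hVmono τ hτ
  have hlast : σ * Real.exp (cj / (1 - q)) ≤ σ * (cj * Real.exp cj + 1) :=
    mul_le_mul_of_nonneg_left hqle hσ.le
  have : ‖y₁ τ - y₂ τ‖ = u τ := by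
    show _ = ‖Y₁ τ - Y₂ τ‖
    rw [hY₁eq τ hτ, hY₂eq τ hτ]
  rw [this]
  nlinarith
end
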